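/- arXiv:1707.09368 — 4 statements merged into one kernel-verified Lean document; each statement's English description precedes it below -/
import Mathlib

section
/- (q-Lucas theorem) Let p be a prime and let ζ be a primitive p-th root of unity in ℂ. Let N, R be natural numbers written as N = N_0 + p·N_1 and R = R_0 + p·R_1 with 0 ≤ N_0 ≤ p-1 and 0 ≤ R_0 ≤ p-1. Then the Gaussian binomial coefficient [N, R]_q evaluated at q = ζ equals [N_0, R_0]_ζ · C(N_1, R_1), where [N_0, R_0]_ζ is the Gaussian binomial evaluated at ζ and C(N_1, R_1) is the ordinary binomial coefficient. -/
/-- The Gaussian binomial coefficient `[n, r]_q` as a polynomial in `q` with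
integer coefficients, defined by the `q`-Pascal recursion
`[n+1, r+1] = [n, r] + q^(r+1) · [n, r+1]`. -/
noncomputable def gaussBinomial : ℕ → ℕ → Polynomial ℤ
  | _, 0 => 1
  | 0, _ + 1 => 0
  | n + 1, r + 1 =>
      gaussBinomial n r + Polynomial.X ^ (r + 1) * gaussBinomial n (r + 1)


open Polynomial

@[simp] lemma gb_zero (n : ℕ) : gaussBinomial n 0 = 1 := by cases n <;> rfl
@[simp] lemma gb_zero_succ (r : ℕ) : gaussBinomial 0 (r+1) = 0 := rfl
lemma gb_succ_succ (n r : ℕ) :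
    gaussBinomial (n+1) (r+1) = gaussBinomial n r + X ^ (r+1) * gaussBinomial n (r+1) := rfl

lemma gb_eq_zero : ∀ {n r : ℕ}, n < r → gaussBinomial n r = 0 := by
  intro n
  induction n with
  | zero => intro r h; cases r with
    | zero => omega
    | succ r => rfl
  | succ n ih =>
    intro r h
    cases r with
    | zero => omega
    | succ r => rw [gb_succ_succ, ih (by omega), ih (by omega)]; ring

lemma gb_diag : ∀ n : ℕ, gaussBinomial n n = 1 := by
  intro n
  induction n with
  | zero => rfl
  | succ n ih => rw [gb_succ_succ, ih, gb_eq_zero (by omega)]; ring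

lemma gb_absorb : ∀ n r : ℕ,
    gaussBinomial n (r+1) * (X ^ (r+1) - 1) = gaussBinomial n r * (X ^ (n - r) - 1) := by
  intro n
  induction n with
  | zero =>
    intro r
    cases r with
    | zero => simp
    | succ r => simp [gb_eq_zero (show 0 < r + 2 by omega)]
  | succ n ih =>
    intro r
    cases r with
    | zero =>
      have h := ih 0
      simp only [Nat.sub_zero, gb_zero, one_mul] at h ⊢
      rw [gb_succ_succ]
      simp only [gb_zero]
      linear_combination (X : Polynomial ℤ) * h
    | succ s =>
      by_cases h : n ≤ s
      · rw [gb_succ_succ, gb_eq_zero (show n < s+1 by omega), gb_eq_zero (show n < s+2 by omega)]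
        rcases eq_or_lt_of_le h with rfl | h2
        · simp [Nat.succ_sub_succ, Nat.sub_self]
        · rw [gb_eq_zero (show n+1 < s+1 by omega)]; ring
      · obtain ⟨m, rfl⟩ : ∃ m, n = s + m + 1 := ⟨n - s - 1, by omega⟩
        have h1 := ih (s+1)
        have h2 := ih s
        have e1 : s + m + 1 - (s + 1) = m := by omega
        have e2 : s + m + 1 - s = m + 1 := by omega
        have e3 : s + m + 1 + 1 - (s + 1) = m + 1 := by omega
        rw [e1] at h1
        rw [e2] at h2
        rw [e3, gb_succ_succ (s+m+1) (s+1), gb_succ_succ (s+m+1) s]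
        linear_combination (X : Polynomial ℤ)^(s+2) * h1 + h2

lemma gb_absorb_eval (n r : ℕ) (ζ : ℂ) :
    (aeval ζ) (gaussBinomial n (r+1)) * (ζ^(r+1) - 1)
      = (aeval ζ) (gaussBinomial n r) * (ζ^(n-r) - 1) := by
  have h := congrArg (aeval ζ) (gb_absorb n r)
  simpa [mul_comm] using h

lemma pow_ne_one {p : ℕ} {ζ : ℂ} (hζ : IsPrimitiveRoot ζ p) {k : ℕ}
    (h0 : 0 < k) (h1 : k < p) : ζ ^ k ≠ 1 := by
  intro h
  have := (hζ.pow_eq_one_iff_dvd k).mp h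
  have := Nat.le_of_dvd h0 this
  omega

lemma gb_p_eval_zero {p : ℕ} {ζ : ℂ} (hζ : IsPrimitiveRoot ζ p) :
    ∀ {r : ℕ}, 0 < r → r < p → (aeval ζ) (gaussBinomial p r) = 0 := by
  have base : ∀ s : ℕ, s + 1 < p → (aeval ζ) (gaussBinomial p (s+1)) = 0 := by
    intro s
    induction s with
    | zero =>
      intro h
      have habs := gb_absorb_eval p 0 ζ
      simp only [Nat.sub_zero, gb_zero, map_one, one_mul, hζ.pow_eq_one, sub_self,
        mul_zero] at habs
      rcases mul_eq_zero.mp habs with h' | h'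
      · exact h'
      · exact absurd (sub_eq_zero.mp h') (pow_ne_one hζ (by omega) h)
    | succ s ih =>
      intro h
      have habs := gb_absorb_eval p (s+1) ζ
      rw [ih (by omega), zero_mul] at habs
      rcases mul_eq_zero.mp habs with h' | h'
      · exact h'
      · exact absurd (sub_eq_zero.mp h') (pow_ne_one hζ (by omega) h)
  intro r h0 h1
  cases r with
  | zero => omega
  | succ s => exact base s h1

lemma gb_key {p : ℕ} {ζ : ℂ} (hp : p.Prime) (hζ : IsPrimitiveRoot ζ p) :
    ∀ n : ℕ,
      (∀ r < p, (aeval ζ) (gaussBinomial (n+p) r) = (aeval ζ) (gaussBinomial n r)) ∧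
      (∀ r : ℕ, (aeval ζ) (gaussBinomial (n+p) (r+p)) =
        (aeval ζ) (gaussBinomial n r) + (aeval ζ) (gaussBinomial n (r+p))) := by
  have hp2 : 2 ≤ p := hp.two_le
  intro n
  induction n with
  | zero =>
    constructor
    · intro r hr
      cases r with
      | zero => simp
      | succ s =>
        rw [Nat.zero_add, gb_p_eval_zero hζ (by omega) hr, gb_zero_succ]
        simp
    · intro r
      cases r with
      | zero =>
        rw [gb_diag, gb_eq_zero (show 0 < 0 + p by omega)]
        simp
      | succ s =>
        rw [Nat.zero_add, gb_eq_zero (show p < s+1+p by omega),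
          gb_eq_zero (show 0 < s+1 by omega), gb_eq_zero (show 0 < s+1+p by omega)]
        simp
  | succ n ih =>
    obtain ⟨ih1, ih2⟩ := ih
    constructor
    · intro r hr
      cases r with
      | zero => simp
      | succ s =>
        rw [show n+1+p = (n+p)+1 from by omega, gb_succ_succ (n+p) s, gb_succ_succ n s]
        simp only [map_add, map_mul, map_pow, aeval_X]
        rw [ih1 s (by omega), ih1 (s+1) hr]
    · intro r
      cases r with
      | zero =>
        obtain ⟨t, rfl⟩ : ∃ t, p = t + 1 := ⟨p - 1, by omega⟩
        rw [Nat.zero_add, show n+1+(t+1) = (n+(t+1))+1 from by omega,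
          gb_succ_succ (n+(t+1)) t, gb_succ_succ n t]
        simp only [map_add, map_mul, map_pow, aeval_X, map_one, gb_zero]
        rw [ih1 t (by omega)]
        have h2 := ih2 0
        rw [Nat.zero_add] at h2
        rw [h2]
        have hone : ζ ^ (t+1) = 1 := hζ.pow_eq_one
        rw [hone]
        simp only [gb_zero, map_one]
        ring
      | succ s =>
        rw [show n+1+p = (n+p)+1 from by omega, show s+1+p = (s+p)+1 from by omega,
          gb_succ_succ (n+p) (s+p), gb_succ_succ n s, gb_succ_succ n (s+p)]
        simp only [map_add, map_mul, map_pow, aeval_X]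
        have h1 := ih2 s
        have h2 := ih2 (s+1)
        rw [show s+1+p = s+p+1 from by omega] at h2
        rw [h1, h2]
        have hz : ζ ^ (s+p+1) = ζ ^ (s+1) := by
          rw [show s+p+1 = (s+1)+p from by omega, pow_add, hζ.pow_eq_one, mul_one]
        rw [hz]
        ring

lemma gb_main {p : ℕ} {ζ : ℂ} (hp : p.Prime) (hζ : IsPrimitiveRoot ζ p)
    {N₀ R₀ : ℕ} (hN₀ : N₀ < p) (hR₀ : R₀ < p) :
    ∀ N₁ R₁ : ℕ, (aeval ζ) (gaussBinomial (N₀ + p * N₁) (R₀ + p * R₁)) =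
      (aeval ζ) (gaussBinomial N₀ R₀) * (N₁.choose R₁ : ℂ) := by
  intro N₁
  induction N₁ with
  | zero =>
    intro R₁
    cases R₁ with
    | zero => simp
    | succ s =>
      rw [Nat.mul_zero, Nat.add_zero,
        gb_eq_zero (show N₀ < R₀ + p * (s+1) from by nlinarith)]
      simp
  | succ k ih =>
    intro R₁
    rw [show N₀ + p * (k+1) = (N₀ + p * k) + p from by ring]
    cases R₁ with
    | zero =>
      rw [Nat.mul_zero, Nat.add_zero, (gb_key hp hζ (N₀ + p * k)).1 R₀ hR₀]
      have := ih 0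
      rw [Nat.mul_zero, Nat.add_zero] at this
      rw [this]
      simp
    | succ s =>
      rw [show R₀ + p * (s+1) = (R₀ + p * s) + p from by ring,
        (gb_key hp hζ (N₀ + p * k)).2 (R₀ + p * s)]
      have h1 := ih s
      have h2 := ih (s+1)
      rw [show R₀ + p * (s+1) = (R₀ + p * s) + p from by ring] at h2
      rw [h1, h2, Nat.choose_succ_succ]
      push_cast
      ring

/-- **q-Lucas theorem.** If `ζ` is a primitive `p`-th root of unity in `ℂ`
(`p` prime), `N = N₀ + p·N₁`, `R = R₀ + p·R₁` with `N₀, R₀ < p`, then the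
Gaussian binomial `[N, R]` evaluated at `ζ` equals `[N₀, R₀]_ζ · C(N₁, R₁)`. -/
theorem q_lucas (p : ℕ) (hp : p.Prime) (ζ : ℂ) (hζ : IsPrimitiveRoot ζ p)
    (N R N₀ N₁ R₀ R₁ : ℕ) (hN : N = N₀ + p * N₁) (hR : R = R₀ + p * R₁)
    (hN₀ : N₀ < p) (hR₀ : R₀ < p) :
    Polynomial.aeval ζ (gaussBinomial N R) =
      Polynomial.aeval ζ (gaussBinomial N₀ R₀) * (N₁.choose R₁ : ℂ) := by
  subst hN hR
  exact gb_main hp hζ hN₀ hR₀ N₁ R₁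
end

section
/- (Fine–Herstein) Let F_q be a finite field with q elements and let n ≥ 1. The number of nilpotent n × n matrices over F_q equals q^{n² - n}. -/
open Module LinearMap

namespace FineHerstein

variable {K V : Type*} [Field K] [AddCommGroup V] [Module K V]

/-- Assemble an endomorphism from endomorphisms of two complementary submodules. -/
noncomputable def assemble (U W : Submodule K V) (hc : IsCompl U W)
    (g : Module.End K U) (h : Module.End K W) : Module.End K V :=
  U.subtype ∘ₗ g ∘ₗ (U.projectionOnto W hc) +
    W.subtype ∘ₗ h ∘ₗ (W.projectionOnto U hc.symm)

lemma assemble_apply_left (U W : Submodule K V) (hc : IsCompl U W)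
    (g : Module.End K U) (h : Module.End K W) (u : U) :
    assemble U W hc g h (u : V) = (g u : V) := by
  simp [assemble, Submodule.projectionOnto_apply_left,
    Submodule.projectionOnto_apply_right hc.symm u]

lemma assemble_apply_right (U W : Submodule K V) (hc : IsCompl U W)
    (g : Module.End K U) (h : Module.End K W) (w : W) :
    assemble U W hc g h (w : V) = (h w : V) := by
  simp [assemble, Submodule.projectionOnto_apply_left,
    Submodule.projectionOnto_apply_right hc w]

lemma assemble_mul (U W : Submodule K V) (hc : IsCompl U W)
    (g g' : Module.End K U) (h h' : Module.End K W) :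
    assemble U W hc g h * assemble U W hc g' h' = assemble U W hc (g * g') (h * h') := by
  ext x
  have hx : ((U.projectionOnto W hc x : U) : V) + ((W.projectionOnto U hc.symm x : W) : V) = x :=
    Submodule.projection_add_projection_eq_self hc x
  have expand : ∀ (a b : Module.End K U) (c d : Module.End K W),
      (assemble U W hc a c * assemble U W hc b d) x
        = assemble U W hc a c (assemble U W hc b d x) := fun _ _ _ _ => rfl
  rw [Module.End.mul_apply]
  conv_lhs => rw [← hx]
  conv_rhs => rw [← hx]
  simp only [map_add, assemble_apply_left, assemble_apply_right, Module.End.mul_apply]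

lemma assemble_pow (U W : Submodule K V) (hc : IsCompl U W)
    (g : Module.End K U) (h : Module.End K W) (m : ℕ) (hm : 1 ≤ m) :
    (assemble U W hc g h) ^ m = assemble U W hc (g ^ m) (h ^ m) := by
  induction m with
  | zero => omega
  | succ m ih =>
    rcases Nat.eq_or_lt_of_le hm with hm1 | hm2
    · simp [← hm1]
    · have h1 : 1 ≤ m := by omega
      rw [pow_succ, ih h1, pow_succ, pow_succ, assemble_mul]

lemma ker_assemble (U W : Submodule K V) (hc : IsCompl U W)
    (g : Module.End K U) (hg : Function.Injective g) :
    LinearMap.ker (assemble U W hc g 0) = W := by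
  ext x
  constructor
  · intro hx
    have hxx : ((U.projectionOnto W hc x : U) : V) + ((W.projectionOnto U hc.symm x : W) : V) = x :=
      Submodule.projection_add_projection_eq_self hc x
    rw [LinearMap.mem_ker] at hx
    conv_lhs at hx => rw [← hxx]
    rw [map_add, assemble_apply_left, assemble_apply_right] at hx
    simp only [LinearMap.zero_apply, ZeroMemClass.coe_zero, add_zero] at hx
    have : g (U.projectionOnto W hc x) = 0 := by
      exact_mod_cast Subtype.ext hx
    have h0 : (U.projectionOnto W hc) x = 0 := hg (by simpa using this)
    conv_lhs at hxx => rw [h0]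
    simp only [ZeroMemClass.coe_zero, zero_add] at hxx
    rw [← hxx]
    exact ((W.projectionOnto U hc.symm) x).2
  · intro hx
    rw [LinearMap.mem_ker]
    have : x = ((⟨x, hx⟩ : W) : V) := rfl
    rw [this, assemble_apply_right]
    simp

lemma range_assemble (U W : Submodule K V) (hc : IsCompl U W)
    (g : Module.End K U) (hg : Function.Surjective g) :
    LinearMap.range (assemble U W hc g 0) = U := by
  apply le_antisymm
  · rintro x ⟨y, rfl⟩
    have hy : assemble U W hc g 0 y = ((g ((U.projectionOnto W hc) y)) : V) := by
      conv_lhs => rw [← (show ((U.projectionOnto W hc y : U) : V) + ((W.projectionOnto U hc.symm y : W) : V) = y from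
        Submodule.projection_add_projection_eq_self hc y)]
      rw [map_add, assemble_apply_left, assemble_apply_right]
      simp
    rw [hy]
    exact (g _).2
  · intro x hx
    obtain ⟨y, hy⟩ := hg ⟨x, hx⟩
    exact ⟨(y : V), by rw [assemble_apply_left, hy]⟩

variable {K V : Type*} [Field K] [AddCommGroup V] [Module K V] [FiniteDimensional K V]

lemma pow_comm_apply (f : Module.End K V) (m : ℕ) (x : V) :
    (f ^ m) (f x) = f ((f ^ m) x) := by
  rw [← Module.End.mul_apply, ← pow_succ, pow_succ', Module.End.mul_apply]

lemma mapsto_range (f : Module.End K V) (m : ℕ) :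
    ∀ x ∈ LinearMap.range (f ^ m), f x ∈ LinearMap.range (f ^ m) := by
  rintro x ⟨y, rfl⟩
  exact ⟨f y, by rw [pow_comm_apply]⟩

lemma mapsto_ker (f : Module.End K V) (m : ℕ) :
    ∀ x ∈ LinearMap.ker (f ^ m), f x ∈ LinearMap.ker (f ^ m) := by
  intro x hx
  rw [LinearMap.mem_ker] at hx ⊢
  rw [pow_comm_apply, hx, map_zero]

lemma range_pow_finrank_le (f : Module.End K V) {m : ℕ} (hm : finrank K V ≤ m) :
    LinearMap.range (f ^ m) ≤ LinearMap.range (f ^ finrank K V) := by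
  rw [show m = finrank K V + (m - finrank K V) by omega, pow_add]
  exact LinearMap.range_comp_le_range _ _

lemma fitting_isCompl (f : Module.End K V) :
    IsCompl (LinearMap.ker (f ^ finrank K V)) (LinearMap.range (f ^ finrank K V)) := by
  obtain ⟨m, hm⟩ := Filter.eventually_atTop.mp f.eventually_isCompl_ker_pow_range_pow
  obtain ⟨m', hm1, hm2⟩ : ∃ m', m ≤ m' ∧ finrank K V ≤ m' :=
    ⟨max m (finrank K V), le_max_left _ _, le_max_right _ _⟩
  have h1 : IsCompl (LinearMap.ker (f ^ m')) (LinearMap.range (f ^ m')) := hm m' hm1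
  have hker : LinearMap.ker (f ^ m') = LinearMap.ker (f ^ finrank K V) :=
    Module.End.ker_pow_eq_ker_pow_finrank_of_le hm2
  have hrange : LinearMap.range (f ^ m') = LinearMap.range (f ^ finrank K V) := by
    apply Submodule.eq_of_le_of_finrank_le (range_pow_finrank_le f hm2)
    have e1 := LinearMap.finrank_range_add_finrank_ker (f ^ m')
    have e2 := LinearMap.finrank_range_add_finrank_ker (f ^ finrank K V)
    rw [hker] at e1
    omega
  rwa [hker, hrange] at h1

/-- The restriction of `f` to the kernel of `f ^ n` is nilpotent. -/
lemma isNilpotent_restrict_ker (f : Module.End K V) :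
    IsNilpotent (f.restrict (mapsto_ker f (finrank K V))) := by
  refine ⟨finrank K V, ?_⟩
  rw [Module.End.pow_restrict]
  ext x
  simp only [LinearMap.restrict_apply, LinearMap.zero_apply, ZeroMemClass.coe_zero]
  exact x.2

/-- The restriction of `f` to the range of `f ^ n` is bijective. -/
lemma bijective_restrict_range (f : Module.End K V) :
    Function.Bijective (f.restrict (mapsto_range f (finrank K V))) := by
  have hinj : Function.Injective (f.restrict (mapsto_range f (finrank K V))) := by
    rw [← LinearMap.ker_eq_bot, Submodule.eq_bot_iff]
    rintro ⟨x, hx⟩ hker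
    rw [LinearMap.mem_ker] at hker
    have hfx : f x = 0 := by
      have := congrArg Subtype.val hker
      simpa [LinearMap.restrict_apply] using this
    by_cases hn : finrank K V = 0
    · haveI : Subsingleton V := Module.finrank_zero_iff.mp hn
      exact Subtype.ext (Subsingleton.elim _ _)
    · have hxker : x ∈ LinearMap.ker (f ^ finrank K V) := by
        rw [LinearMap.mem_ker, show finrank K V = (finrank K V - 1) + 1 by omega, pow_succ,
          Module.End.mul_apply, hfx, map_zero]
      have := Submodule.disjoint_def.mp (fitting_isCompl f).disjoint x hxker hx
      exact Subtype.ext this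
  exact ⟨hinj, LinearMap.injective_iff_surjective.mp hinj⟩

lemma pow_eq_zero_of_isNilpotent {M : Type*} [AddCommGroup M] [Module K M]
    [FiniteDimensional K M] (f : Module.End K M) (h : IsNilpotent f) {m : ℕ}
    (hm : finrank K M ≤ m) : f ^ m = 0 := by
  have h1 : f ^ finrank K M = 0 := by
    have hc := (LinearMap.isNilpotent_iff_charpoly f).mp h
    have h2 := LinearMap.aeval_self_charpoly f
    rw [hc] at h2
    simpa using h2
  rw [show m = finrank K M + (m - finrank K M) by omega, pow_add, h1, zero_mul]

lemma end_pow_bijective {M : Type*} [AddCommGroup M] [Module K M]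
    (e : M ≃ₗ[K] M) (m : ℕ) : Function.Bijective ((e : Module.End K M) ^ m) := by
  have : ⇑((e : Module.End K M) ^ m) = (⇑e)^[m] := by
    ext x; rw [Module.End.pow_apply]; rfl
  rw [this]
  exact (Function.Bijective.iterate e.bijective m)

/-- The type of complementary pairs of submodules. -/
abbrev Pairs (K V : Type*) [Field K] [AddCommGroup V] [Module K V] :=
  {p : Submodule K V × Submodule K V // IsCompl p.1 p.2}

/-- The fiber data: an automorphism of the first part and a nilpotent endo of the second. -/
abbrev Fib (p : Pairs K V) :=
  ((p.1.1 ≃ₗ[K] p.1.1) × {h : Module.End K p.1.2 // IsNilpotent h})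

noncomputable def B : (Σ p : Pairs K V, Fib p) → Module.End K V :=
  fun d => assemble d.1.1.1 d.1.1.2 d.1.2 (d.2.1 : Module.End K d.1.1.1) d.2.2.1

lemma B_pow (hn : 1 ≤ finrank K V) (d : Σ p : Pairs K V, Fib p) :
    (B d) ^ finrank K V
      = assemble d.1.1.1 d.1.1.2 d.1.2 ((d.2.1 : Module.End K d.1.1.1) ^ finrank K V) 0 := by
  rw [B, assemble_pow _ _ _ _ _ _ hn]
  congr 1
  apply pow_eq_zero_of_isNilpotent _ d.2.2.2
  have := Submodule.finrank_add_eq_of_isCompl d.1.2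
  omega

lemma ker_B_pow (hn : 1 ≤ finrank K V) (d : Σ p : Pairs K V, Fib p) :
    LinearMap.ker ((B d) ^ finrank K V) = d.1.1.2 := by
  rw [B_pow hn d]
  exact ker_assemble _ _ _ _ (end_pow_bijective d.2.1 _).injective

lemma range_B_pow (hn : 1 ≤ finrank K V) (d : Σ p : Pairs K V, Fib p) :
    LinearMap.range ((B d) ^ finrank K V) = d.1.1.1 := by
  rw [B_pow hn d]
  exact range_assemble _ _ _ _ (end_pow_bijective d.2.1 _).surjective

lemma B_bijective (hn : 1 ≤ finrank K V) : Function.Bijective (B (K := K) (V := V)) := by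
  constructor
  · rintro ⟨⟨⟨U, W⟩, hc⟩, g, h⟩ ⟨⟨⟨U', W'⟩, hc'⟩, g', h'⟩ heq
    have hU : U = U' := by
      have h1 := range_B_pow hn ⟨⟨⟨U, W⟩, hc⟩, g, h⟩
      have h2 := range_B_pow hn ⟨⟨⟨U', W'⟩, hc'⟩, g', h'⟩
      rw [heq] at h1; exact h1.symm.trans h2
    have hW : W = W' := by
      have h1 := ker_B_pow hn ⟨⟨⟨U, W⟩, hc⟩, g, h⟩
      have h2 := ker_B_pow hn ⟨⟨⟨U', W'⟩, hc'⟩, g', h'⟩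
      rw [heq] at h1; exact h1.symm.trans h2
    subst hU; subst hW
    have hg : g = g' := by
      apply LinearEquiv.toLinearMap_injective
      ext u
      have := congrArg (fun φ => φ (u : V)) heq
      simp only [B, assemble_apply_left] at this
      exact_mod_cast this
    have hh : h = h' := by
      apply Subtype.ext
      ext w
      have := congrArg (fun φ => φ (w : V)) heq
      simp only [B, assemble_apply_right] at this
      exact_mod_cast this
    rw [hg, hh]
  · intro f
    set U := LinearMap.range (f ^ finrank K V) with hU
    set W := LinearMap.ker (f ^ finrank K V) with hW
    have hc : IsCompl U W := (fitting_isCompl f).symm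
    refine ⟨⟨⟨⟨U, W⟩, hc⟩,
      LinearEquiv.ofBijective (f.restrict (mapsto_range f (finrank K V)))
        (bijective_restrict_range f),
      ⟨f.restrict (mapsto_ker f (finrank K V)), isNilpotent_restrict_ker f⟩⟩, ?_⟩
    ext x
    have hx : ((U.projectionOnto W hc x : U) : V) + ((W.projectionOnto U hc.symm x : W) : V) = x :=
      Submodule.projection_add_projection_eq_self hc x
    conv_rhs => rw [← hx]
    conv_lhs => rw [B, ← hx]
    rw [map_add, map_add, assemble_apply_left, assemble_apply_right]
    show ((f.restrict (mapsto_range f (finrank K V))) ((U.projectionOnto W hc) x) : V) + _ = _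
    rw [LinearMap.restrict_coe_apply, LinearMap.restrict_coe_apply]


attribute [local instance] Fintype.ofFinite

variable {K : Type*} [Field K] [Fintype K]

instance finite_linearMap {M N : Type*} [AddCommGroup M] [Module K M]
    [AddCommGroup N] [Module K N] [Finite M] [Finite N] : Finite (M →ₗ[K] N) :=
  Finite.of_injective (fun f => (f : M → N)) DFunLike.coe_injective

instance finite_linearEquiv {M N : Type*} [AddCommGroup M] [Module K M]
    [AddCommGroup N] [Module K N] [Finite M] [Finite N] : Finite (M ≃ₗ[K] N) :=
  Finite.of_injective (fun f => (f : M → N)) (fun f g h => by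
    apply LinearEquiv.toLinearMap_injective; ext x; exact congrFun h x)

lemma card_linearMap (M N : Type*) [AddCommGroup M] [Module K M]
    [AddCommGroup N] [Module K N] [FiniteDimensional K M] [FiniteDimensional K N] :
    Nat.card (M →ₗ[K] N) = Fintype.card K ^ (finrank K M * finrank K N) := by
  haveI : Finite M := Module.finite_of_finite K
  haveI : Finite N := Module.finite_of_finite K
  rw [Nat.card_eq_fintype_card, card_eq_pow_finrank (K := K), Module.finrank_linearMap]

variable {V : Type*} [AddCommGroup V] [Module K V] [FiniteDimensional K V]

lemma card_complements (U : Submodule K V) :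
    Nat.card {W : Submodule K V // IsCompl U W}
      = Fintype.card K ^ ((finrank K V - finrank K U) * finrank K U) := by
  haveI : Finite V := Module.finite_of_finite K
  obtain ⟨W₀, hW₀⟩ := Submodule.exists_isCompl U
  set π₀ := U.projectionOnto W₀ hW₀ with hπ₀
  rw [Nat.card_congr (U.isComplEquivProj)]
  have hbij : Function.Bijective (fun g : (V ⧸ U) →ₗ[K] U =>
      (⟨π₀ + g ∘ₗ U.mkQ, by
        intro x
        simp only [LinearMap.add_apply, LinearMap.comp_apply, Submodule.mkQ_apply]
        rw [hπ₀, Submodule.projectionOnto_apply_left hW₀ x,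
          (Submodule.Quotient.mk_eq_zero U).mpr x.2, map_zero, add_zero]⟩ :
        {f : V →ₗ[K] U // ∀ x : U, f ↑x = x})) := by
    constructor
    · intro g g' hgg
      have h1 : π₀ + g ∘ₗ U.mkQ = π₀ + g' ∘ₗ U.mkQ := congrArg Subtype.val hgg
      have h2 : g ∘ₗ U.mkQ = g' ∘ₗ U.mkQ := by
        have := add_left_cancel h1
        exact this
      exact Submodule.linearMap_qext U h2
    · rintro ⟨f, hf⟩
      have hker : ∀ x ∈ U, (f - π₀) x = 0 := by
        intro x hx
        have h1 : f x = ⟨x, hx⟩ := hf ⟨x, hx⟩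
        have h2 : π₀ x = ⟨x, hx⟩ := Submodule.projectionOnto_apply_left hW₀ ⟨x, hx⟩
        rw [LinearMap.sub_apply, h1, h2, sub_self]
      refine ⟨U.liftQ (f - π₀) (fun x hx => LinearMap.mem_ker.mpr (hker x hx)), ?_⟩
      apply Subtype.ext
      simp only
      rw [Submodule.liftQ_mkQ]
      abel
  rw [← Nat.card_eq_of_bijective _ hbij, card_linearMap]
  congr 2
  have := Submodule.finrank_quotient_add_finrank U
  omega

lemma card_aut_eq (U : Submodule K V) {k : ℕ} (hU : finrank K U = k) :
    Nat.card (U ≃ₗ[K] U) = Nat.card ((Fin k → K) ≃ₗ[K] U) := by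
  obtain ⟨e₀⟩ := FiniteDimensional.nonempty_linearEquiv_of_finrank_eq
    (M := Fin k → K) (M' := U) (by rw [Module.finrank_fintype_fun_eq_card, Fintype.card_fin, hU])
  exact Nat.card_congr ⟨fun a => e₀.trans a, fun x => e₀.symm.trans x,
    fun a => by ext u; simp, fun x => by ext v; simp⟩

lemma sum_card_aut {k : ℕ} (hk : k ≤ finrank K V) :
    haveI : Finite V := Module.finite_of_finite K
    ∑ U : {U : Submodule K V // finrank K U = k}, Nat.card (U.1 ≃ₗ[K] U.1)
      = ∏ i : Fin k, (Fintype.card K ^ finrank K V - Fintype.card K ^ (i : ℕ)) := by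
  haveI : Finite V := Module.finite_of_finite K
  rw [← card_linearIndependent (K := K) (V := V) hk]
  set σ : {s : Fin k → V // LinearIndependent K s} → {U : Submodule K V // finrank K U = k} :=
    fun s => ⟨Submodule.span K (Set.range s.1), by
      rw [finrank_span_eq_card s.2, Fintype.card_fin]⟩ with hσ
  rw [Nat.card_congr (Equiv.sigmaFiberEquiv σ).symm, Nat.card_eq_fintype_card,
    Fintype.card_sigma]
  apply Finset.sum_congr rfl
  intro U _
  rw [← Nat.card_eq_fintype_card, card_aut_eq U.1 U.2]
  apply Nat.card_eq_of_bijective (fun e => (⟨⟨fun i => (e (Pi.basisFun K (Fin k) i) : V), by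
      have : (fun i => ((e (Pi.basisFun K (Fin k) i) : V)))
          = (U.1.subtype ∘ₗ (e : (Fin k → K) →ₗ[K] U.1)) ∘ (Pi.basisFun K (Fin k)) := rfl
      rw [this]
      exact (Pi.basisFun K (Fin k)).linearIndependent.map'
        (U.1.subtype ∘ₗ (e : (Fin k → K) →ₗ[K] U.1))
        (LinearMap.ker_eq_bot.mpr (U.1.injective_subtype.comp e.injective))⟩, by
      apply Subtype.ext
      show Submodule.span K _ = U.1
      have hr : Set.range (fun i => ((e (Pi.basisFun K (Fin k) i) : V)))
          = (U.1.subtype ∘ₗ (e : (Fin k → K) →ₗ[K] U.1)) '' (Set.range (Pi.basisFun K (Fin k))) := by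
        rw [← Set.range_comp]; rfl
      rw [hr, ← Submodule.map_span, Basis.span_eq, Submodule.map_top, LinearMap.range_comp,
        LinearEquiv.range, Submodule.map_top, Submodule.range_subtype]⟩ :
      {s : {s : Fin k → V // LinearIndependent K s} // σ s = U}))
  constructor
  · intro e e' hee
    have h1 : ∀ i, ((e (Pi.basisFun K (Fin k) i) : V)) = ((e' (Pi.basisFun K (Fin k) i) : V)) := by
      intro i
      exact congrFun (congrArg (fun z => (z.1.1 : Fin k → V)) hee) i
    apply LinearEquiv.toLinearMap_injective
    apply Basis.ext (Pi.basisFun K (Fin k))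
    intro i
    exact Subtype.coe_injective (h1 i)
  · rintro ⟨⟨s, hli⟩, hspan⟩
    have hsp : Submodule.span K (Set.range s) = U.1 := congrArg Subtype.val hspan
    set b' : Basis (Fin k) K U.1 := (Basis.span hli).map (LinearEquiv.ofEq _ _ hsp) with hb'
    refine ⟨(Pi.basisFun K (Fin k)).equiv b' (Equiv.refl _), ?_⟩
    apply Subtype.ext
    apply Subtype.ext
    show (fun i => (((Pi.basisFun K (Fin k)).equiv b' (Equiv.refl _) (Pi.basisFun K (Fin k) i) : U.1) : V)) = s
    funext i
    rw [Basis.equiv_apply, hb']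
    simp only [Basis.map_apply, Equiv.refl_apply]
    show ((LinearEquiv.ofEq _ _ hsp) ((Basis.span hli) i) : V) = s i
    rw [LinearEquiv.coe_ofEq_apply, Basis.span_apply]


lemma conj_pow' {K M N : Type*} [Field K] [AddCommGroup M] [Module K M]
    [AddCommGroup N] [Module K N] (e : M ≃ₗ[K] N) (f : Module.End K M) (m : ℕ) :
    e.conj (f ^ m) = (e.conj f) ^ m := by
  induction m with
  | zero =>
    ext x
    simp [LinearEquiv.conj_apply_apply]
  | succ m ih =>
    rw [pow_succ, pow_succ, ← ih]
    ext x
    simp [LinearEquiv.conj_apply_apply, Module.End.mul_apply]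

lemma isNilpotent_conj_iff {K M N : Type*} [Field K] [AddCommGroup M] [Module K M]
    [AddCommGroup N] [Module K N] (e : M ≃ₗ[K] N) (f : Module.End K M) :
    IsNilpotent (e.conj f) ↔ IsNilpotent f := by
  constructor
  · rintro ⟨m, hm⟩
    refine ⟨m, ?_⟩
    have := congrArg (fun g => e.symm.conj g) (conj_pow' e f m ▸ hm)
    simpa [LinearEquiv.conj_apply_apply] using
      (by
        ext x
        have h1 := congrArg (fun g : Module.End K N => e.symm (g (e x))) hm
        rw [← conj_pow' e f m] at h1
        simpa [LinearEquiv.conj_apply_apply] using h1 : f ^ m = 0)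
  · rintro ⟨m, hm⟩
    exact ⟨m, by rw [← conj_pow', hm]; ext x; simp [LinearEquiv.conj_apply_apply]⟩

/-- The telescoping arithmetic step. -/
lemma key_step (q j m' : ℕ) (hq : 1 ≤ q) :
    q ^ ((m' + 1) * (j + m' + 1)) + (q ^ (j + m' + 2) - q ^ (j + 1)) * q ^ ((j + m' + 2) * m')
      = q ^ ((j + m' + 2) * (m' + 1)) := by
  have h1 : q ^ (j + 1) * q ^ ((j + m' + 2) * m') = q ^ ((m' + 1) * (j + m' + 1)) := by
    rw [← pow_add]; congr 1; ring
  have h2 : q ^ (j + m' + 2) * q ^ ((j + m' + 2) * m') = q ^ ((j + m' + 2) * (m' + 1)) := by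
    rw [← pow_add]; congr 1; ring
  have h3 : q ^ ((m' + 1) * (j + m' + 1)) ≤ q ^ ((j + m' + 2) * (m' + 1)) := by
    apply Nat.pow_le_pow_right hq
    nlinarith
  rw [Nat.sub_mul, h1, h2]
  omega

lemma telescope (q n : ℕ) (hq : 1 ≤ q) :
    ∀ j, j ≤ n →
      (∑ k ∈ Finset.range (j + 1), (∏ i : Fin k, (q ^ n - q ^ (i : ℕ))) * q ^ ((n - k) * (n - 1)))
        + (∏ i : Fin (j + 1), (q ^ n - q ^ (i : ℕ))) * q ^ (n * (n - (j + 1))) = q ^ (n * n) := by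
  intro j
  induction j with
  | zero =>
    intro hj
    have h0 : 1 ≤ q ^ n := Nat.one_le_pow _ _ hq
    rw [Finset.sum_range_one]
    simp only [Finset.univ_eq_empty, Finset.prod_empty, one_mul,
      Fin.prod_univ_one, Fin.val_zero, pow_zero, Nat.sub_zero, Nat.zero_add]
    have hp : (∏ i : Fin (0 + 1), (q ^ n - q ^ (i : ℕ))) = q ^ n - 1 := by simp
    rw [hp]
    have e2 : (q ^ n - 1) * q ^ (n * (n - 1)) = q ^ (n + n * (n - 1)) - q ^ (n * (n - 1)) := by
      rw [Nat.sub_mul, one_mul, ← pow_add]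
    have hnn : n + n * (n - 1) = n * n := by
      cases n with
      | zero => simp
      | succ n' => simp only [Nat.succ_sub_one]; ring
    have hle : q ^ (n * (n - 1)) ≤ q ^ (n * n) :=
      Nat.pow_le_pow_right hq (Nat.mul_le_mul_left n (by omega))
    rw [e2, hnn]
    omega
  | succ j ih =>
    intro hj
    have hjn : j ≤ n := by omega
    have hih := ih hjn
    rw [Finset.sum_range_succ]
    -- the new term plus the new remainder should equal the old remainder
    have hkey : (∏ i : Fin (j + 1), (q ^ n - q ^ (i : ℕ))) * q ^ ((n - (j + 1)) * (n - 1))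
        + (∏ i : Fin (j + 1 + 1), (q ^ n - q ^ (i : ℕ))) * q ^ (n * (n - (j + 1 + 1)))
        = (∏ i : Fin (j + 1), (q ^ n - q ^ (i : ℕ))) * q ^ (n * (n - (j + 1))) := by
      have hprod : (∏ i : Fin (j + 1 + 1), (q ^ n - q ^ (i : ℕ)))
          = (∏ i : Fin (j + 1), (q ^ n - q ^ (i : ℕ))) * (q ^ n - q ^ (j + 1)) := by
        rw [Fin.prod_univ_castSucc]
        rfl
      rw [hprod]
      rcases Nat.lt_or_ge (j + 1) n with hlt | hge
      · -- n = j + m' + 2 for m' = n - j - 2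
        obtain ⟨m', rfl⟩ : ∃ m', n = j + m' + 2 := ⟨n - j - 2, by omega⟩
        have e1 : (j + m' + 2) - (j + 1) = m' + 1 := by omega
        have e2 : (j + m' + 2) - 1 = j + m' + 1 := by omega
        have e3 : (j + m' + 2) - (j + 1 + 1) = m' := by omega
        rw [e1, e2, e3, mul_assoc, ← Nat.mul_add]
        congr 1
        exact key_step q j m' hq
      · -- j + 1 ≥ n : the factor q ^ n - q ^ (j+1)  is 0 and n - (j+1) = 0
        have hz : q ^ n - q ^ (j + 1) = 0 := by
          have : q ^ n ≤ q ^ (j + 1) := Nat.pow_le_pow_right hq hge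
          omega
        have hz2 : n - (j + 1 + 1) = 0 := by omega
        rw [hz, hz2]
        have hn : n = j + 1 := by omega
        subst hn
        simp
    omega


attribute [local instance] Fintype.ofFinite

universe u v

lemma exp_comb {k n : ℕ} (hk : k ≤ n) :
    (n - k) * k + ((n - k) * (n - k) - (n - k)) = (n - k) * (n - 1) := by
  rcases Nat.eq_or_lt_of_le hk with rfl | hlt
  · simp
  · obtain ⟨m', rfl⟩ : ∃ m', n = k + m' + 1 := ⟨n - k - 1, by omega⟩
    have e1 : k + m' + 1 - k = m' + 1 := by omega
    have e2 : k + m' + 1 - 1 = k + m' := by omega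
    rw [e1, e2]
    have e3 : (m' + 1) * (m' + 1) - (m' + 1) = (m' + 1) * m' := by
      have : (m' + 1) * (m' + 1) = (m' + 1) * m' + (m' + 1) := by ring
      omega
    rw [e3]
    ring

lemma mul_pred_eq (n : ℕ) : n * (n - 1) = n * n - n := by
  cases n with
  | zero => simp
  | succ m =>
    have : (m + 1) * (m + 1) = (m + 1) * m + (m + 1) := by ring
    simp only [Nat.succ_sub_one]
    omega

variable {K : Type u} [Field K] [Fintype K]

variable {V : Type v} [AddCommGroup V] [Module K V]

/-- Regrouping the pairs with an automorphism by the first submodule. -/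
def regroupEquiv (k : ℕ) :
    (Σ p : {p : Pairs K V // finrank K p.1.1 = k}, (p.1.1.1 ≃ₗ[K] p.1.1.1))
      ≃ (Σ U : {U : Submodule K V // finrank K U = k},
          ({W : Submodule K V // IsCompl U.1 W} × (U.1 ≃ₗ[K] U.1))) where
  toFun d := ⟨⟨d.1.1.1.1, d.1.2⟩, ⟨d.1.1.1.2, d.1.1.2⟩, d.2⟩
  invFun d := ⟨⟨⟨⟨d.1.1, d.2.1.1⟩, d.2.1.2⟩, d.1.2⟩, d.2.2⟩
  left_inv d := rfl
  right_inv d := rfl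

theorem card_nilpotent_end (q : ℕ) (hK : Fintype.card K = q) (n : ℕ) :
    ∀ {V : Type v} [AddCommGroup V] [Module K V] [FiniteDimensional K V],
      finrank K V = n → Nat.card {f : Module.End K V // IsNilpotent f} = q ^ (n * n - n) := by
  have hq : 1 ≤ q := hK ▸ Fintype.card_pos
  induction n using Nat.strong_induction_on with
  | _ n IH =>
  intro V _ _ _ hV
  classical
  haveI : Finite V := Module.finite_of_finite K
  rcases Nat.eq_zero_or_pos n with rfl | hn1
  · haveI : Subsingleton V := by
      rw [← Module.finrank_zero_iff (R := K)]; omega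
    haveI : Unique {f : Module.End K V // IsNilpotent f} :=
      { default := ⟨0, IsNilpotent.zero⟩
        uniq := fun f => Subtype.ext (LinearMap.ext fun x => Subsingleton.elim _ _) }
    rw [show (0 * 0 - 0 : ℕ) = 0 from rfl, pow_zero]
    exact Nat.card_unique
  -- main case
  have hn : 1 ≤ finrank K V := by omega
  -- abbreviations
  set T := Nat.card {f : Module.End K V // IsNilpotent f} with hT
  -- Step 1 : total count
  have step1 : q ^ (n * n) = ∑ k ∈ Finset.range (n + 1),
      ∑ p ∈ Finset.univ.filter (fun p : Pairs K V => finrank K p.1.1 = k),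
        Nat.card (Fib p) := by
    have h1 : Nat.card (Module.End K V) = q ^ (n * n) := by
      rw [card_linearMap, hK, hV]
    have h2 : Nat.card (Σ p : Pairs K V, Fib p) = Nat.card (Module.End K V) :=
      Nat.card_eq_of_bijective _ (B_bijective hn)
    rw [← h1, ← h2, Nat.card_eq_fintype_card, Fintype.card_sigma,
      ← Finset.sum_fiberwise_of_maps_to
        (g := fun p : Pairs K V => finrank K p.1.1) (t := Finset.range (n + 1))
        (fun p _ => Finset.mem_range.mpr (by
          show finrank K p.1.1 < n + 1
          have := Submodule.finrank_le p.1.1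
          omega))]
    exact Finset.sum_congr rfl fun k _ => Finset.sum_congr rfl fun p _ =>
      (Nat.card_eq_fintype_card).symm
  -- Step 2 : the k = 0 fiber
  have step2 : ∑ p ∈ Finset.univ.filter (fun p : Pairs K V => finrank K p.1.1 = 0),
      Nat.card (Fib p) = T := by
    have hfil : Finset.univ.filter (fun p : Pairs K V => finrank K p.1.1 = 0)
        = {⟨(⊥, ⊤), isCompl_bot_top⟩} := by
      apply Finset.eq_singleton_iff_unique_mem.mpr
      constructor
      · simp [Finset.mem_filter]
      · rintro ⟨⟨U, W⟩, hc⟩ hmem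
        rw [Finset.mem_filter] at hmem
        have hU : U = ⊥ := Submodule.finrank_eq_zero.mp hmem.2
        subst hU
        have hW : W = ⊤ := by
          have := hc.codisjoint
          rwa [codisjoint_iff, bot_sup_eq] at this
        subst hW
        rfl
    rw [hfil, Finset.sum_singleton]
    show Nat.card ((((⊥ : Submodule K V) ≃ₗ[K] (⊥ : Submodule K V))) ×
      {h : Module.End K (⊤ : Submodule K V) // IsNilpotent h}) = T
    rw [Nat.card_prod]
    have hbot : Nat.card ((⊥ : Submodule K V) ≃ₗ[K] (⊥ : Submodule K V)) = 1 := by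
      haveI : Unique ((⊥ : Submodule K V) ≃ₗ[K] (⊥ : Submodule K V)) :=
        { default := LinearEquiv.refl K _
          uniq := fun e => by ext x }
      exact Nat.card_unique
    have htop : Nat.card {h : Module.End K (⊤ : Submodule K V) // IsNilpotent h} = T := by
      rw [hT]
      apply Nat.card_congr
      exact
        { toFun := fun h => ⟨(Submodule.topEquiv (R := K) (M := V)).conj h.1,
            (isNilpotent_conj_iff _ _).mpr h.2⟩
          invFun := fun f => ⟨(Submodule.topEquiv (R := K) (M := V)).symm.conj f.1,
            (isNilpotent_conj_iff _ _).mpr f.2⟩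
          left_inv := fun h => Subtype.ext (by ext x; rfl)
          right_inv := fun f => Subtype.ext (by ext x; rfl) }
    rw [hbot, htop, one_mul]
  -- Step 3 : the fibers for 1 ≤ k ≤ n
  have step3 : ∀ k, 1 ≤ k → k ≤ n →
      ∑ p ∈ Finset.univ.filter (fun p : Pairs K V => finrank K p.1.1 = k),
        Nat.card (Fib p)
      = (∏ i : Fin k, (q ^ n - q ^ (i : ℕ))) * q ^ ((n - k) * (n - 1)) := by
    intro k hk1 hkn
    have hcard : ∀ p ∈ Finset.univ.filter (fun p : Pairs K V => finrank K p.1.1 = k),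
        Nat.card (Fib p)
          = Nat.card (p.1.1 ≃ₗ[K] p.1.1) * q ^ ((n - k) * (n - k) - (n - k)) := by
      rintro p hp
      rw [Finset.mem_filter] at hp
      have hW : finrank K p.1.2 = n - k := by
        have := Submodule.finrank_add_eq_of_isCompl p.2
        rw [hp.2, hV] at this
        omega
      rw [Nat.card_prod]
      congr 1
      exact IH (n - k) (by omega) hW
    rw [Finset.sum_congr rfl hcard, ← Finset.sum_mul]
    have hsum : ∑ p ∈ Finset.univ.filter (fun p : Pairs K V => finrank K p.1.1 = k),
        Nat.card (p.1.1 ≃ₗ[K] p.1.1)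
        = q ^ ((n - k) * k) * (∏ i : Fin k, (q ^ n - q ^ (i : ℕ))) := by
      rw [Finset.sum_subtype (p := fun p : Pairs K V => finrank K p.1.1 = k)
        (Finset.univ.filter (fun p : Pairs K V => finrank K p.1.1 = k))
        (fun x => by simp) (fun p : Pairs K V => Nat.card (p.1.1 ≃ₗ[K] p.1.1))]
      have e1 : ∑ pp : {p : Pairs K V // finrank K p.1.1 = k},
          Nat.card (pp.1.1.1 ≃ₗ[K] pp.1.1.1)
          = Fintype.card (Σ pp : {p : Pairs K V // finrank K p.1.1 = k},
              (pp.1.1.1 ≃ₗ[K] pp.1.1.1)) := by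
        rw [Fintype.card_sigma]
        exact Finset.sum_congr rfl fun pp _ => Nat.card_eq_fintype_card
      rw [e1, Fintype.card_congr (regroupEquiv k), Fintype.card_sigma]
      have e2 : ∀ U : {U : Submodule K V // finrank K U = k},
          Fintype.card ({W : Submodule K V // IsCompl U.1 W} × (U.1 ≃ₗ[K] U.1))
            = q ^ ((n - k) * k) * Nat.card (U.1 ≃ₗ[K] U.1) := by
        intro U
        rw [Fintype.card_prod, ← Nat.card_eq_fintype_card, ← Nat.card_eq_fintype_card,
          card_complements U.1, hK, hV, U.2]
      rw [Finset.sum_congr rfl (fun U _ => e2 U), ← Finset.mul_sum]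
      congr 1
      have := sum_card_aut (K := K) (V := V) (k := k) (hV ▸ hkn)
      exact this.trans (by rw [hK, hV])
    rw [hsum]
    rw [mul_assoc, mul_comm (q ^ ((n - k) * k)), mul_assoc, ← pow_add]
    congr 1
    rw [Nat.add_comm]
    exact congrArg (q ^ ·) (exp_comb hkn)
  -- Step 4 : telescoping identity
  have step4 : ∑ k ∈ Finset.range (n + 1),
      (∏ i : Fin k, (q ^ n - q ^ (i : ℕ))) * q ^ ((n - k) * (n - 1)) = q ^ (n * n) := by
    have := telescope q n hq n le_rfl
    have hzero : (∏ i : Fin (n + 1), (q ^ n - q ^ (i : ℕ))) = 0 := by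
      apply Finset.prod_eq_zero (Finset.mem_univ (Fin.last n))
      simp [Fin.val_last]
    rw [hzero, zero_mul, add_zero] at this
    exact this
  -- Step 5 : combine
  rw [Finset.sum_range_succ'] at step1 step4
  have hterm : ∀ k ∈ Finset.range n,
      (∑ p ∈ Finset.univ.filter (fun p : Pairs K V => finrank K p.1.1 = k + 1),
        Nat.card (Fib p))
      = (∏ i : Fin (k + 1), (q ^ n - q ^ (i : ℕ))) * q ^ ((n - (k + 1)) * (n - 1)) := by
    intro k hk
    rw [Finset.mem_range] at hk
    exact step3 (k + 1) (by omega) (by omega)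
  rw [Finset.sum_congr rfl hterm, step2] at step1
  have hzero_term : (∏ i : Fin 0, (q ^ n - q ^ (i : ℕ))) * q ^ ((n - 0) * (n - 1))
      = q ^ (n * (n - 1)) := by simp
  rw [hzero_term] at step4
  have : T = q ^ (n * (n - 1)) := by omega
  rw [this, mul_pred_eq]

end FineHerstein

/-- **Fine–Herstein.** The number of nilpotent `n × n` matrices over a finite
field with `q` elements is `q ^ (n² - n)`. -/
theorem card_nilpotent_matrices (q n : ℕ) (hn : 1 ≤ n)
    (K : Type*) [Field K] [Fintype K] (hK : Fintype.card K = q) :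
    Nat.card {A : Matrix (Fin n) (Fin n) K // A ^ n = 0} = q ^ (n ^ 2 - n) := by
  classical
  have hfr : finrank K (Fin n → K) = n := by
    rw [Module.finrank_fintype_fun_eq_card, Fintype.card_fin]
  have e1 : {A : Matrix (Fin n) (Fin n) K // A ^ n = 0}
      ≃ {f : Module.End K (Fin n → K) // f ^ n = 0} :=
    { toFun := fun A => ⟨Matrix.toLinAlgEquiv' A.1, by rw [← map_pow, A.2, map_zero]⟩
      invFun := fun f => ⟨Matrix.toLinAlgEquiv'.symm f.1, by
        rw [← map_pow, f.2, map_zero]⟩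
      left_inv := fun A => Subtype.ext (Matrix.toLinAlgEquiv'.symm_apply_apply A.1)
      right_inv := fun f => Subtype.ext (Matrix.toLinAlgEquiv'.apply_symm_apply f.1) }
  have e2 : {f : Module.End K (Fin n → K) // f ^ n = 0}
      ≃ {f : Module.End K (Fin n → K) // IsNilpotent f} :=
    Equiv.subtypeEquivRight (fun f => ⟨fun h => ⟨n, h⟩,
      fun h => FineHerstein.pow_eq_zero_of_isNilpotent f h (le_of_eq hfr)⟩)
  rw [Nat.card_congr (e1.trans e2), FineHerstein.card_nilpotent_end q hK n hfr]
  congr 1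
  rw [pow_two]
end

section
/- (Steinberg's count for GL_n) Let F_q be a finite field with q elements and let n ≥ 1. The number of unipotent elements of the group GL_n(F_q) equals q^{n(n-1)}, which is the square of the order of a Sylow p-subgroup of GL_n(F_q) when q is a power of the prime p. -/
open Module LinearMap Finset Submodule

namespace SteinbergGLAux

/-! ### Numerical identities -/

/-- `GG q m = ∏_{i<m} (q^m - q^i)`, the order of `GL_m(F_q)`. -/
def GG (q m : ℕ) : ℕ := ∏ i ∈ Finset.range m, (q ^ m - q ^ i)

lemma GG_eq (q : ℕ) (hq : 1 ≤ q) (m : ℕ) :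
    GG q m = q ^ (∑ i ∈ Finset.range m, i) * ∏ i ∈ Finset.range m, (q ^ (i + 1) - 1) := by
  rw [GG]
  have hfac : ∀ i ∈ Finset.range m, q ^ m - q ^ i = q ^ i * (q ^ (m - i) - 1) := by
    intro i hi
    have hi' : i < m := Finset.mem_range.mp hi
    rw [Nat.mul_sub, mul_one, ← pow_add]
    congr 2
    omega
  rw [Finset.prod_congr rfl hfac, Finset.prod_mul_distrib, Finset.prod_pow_eq_pow_sum]
  congr 1
  rw [← Finset.prod_range_reflect (fun j => q ^ (j + 1) - 1) m]
  refine Finset.prod_congr rfl fun i hi => ?_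
  have hi' : i < m := Finset.mem_range.mp hi
  congr 2
  omega

lemma GG_succ (q : ℕ) (hq : 1 ≤ q) (m : ℕ) :
    GG q (m + 1) = q ^ m * (q ^ (m + 1) - 1) * GG q m := by
  rw [GG_eq q hq, GG_eq q hq, Finset.sum_range_succ, Finset.prod_range_succ, pow_add]
  ring

lemma GG_pos (q : ℕ) (hq : 2 ≤ q) (m : ℕ) : 0 < GG q m := by
  refine Finset.prod_pos fun i hi => ?_
  have := Nat.pow_lt_pow_right (by omega : 1 < q) (Finset.mem_range.mp hi)
  omega

/-- `nu q n k = q^{k²-k} · |GL_n| / |GL_k|` (defined without division). -/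
def nu (q n k : ℕ) : ℕ :=
  q ^ (k * k - k) * (q ^ (∑ i ∈ Finset.Ico k n, i) * ∏ i ∈ Finset.Ico k n, (q ^ (i + 1) - 1))

lemma nu_mul_GG (q : ℕ) (hq : 1 ≤ q) {n k : ℕ} (hk : k ≤ n) :
    nu q n k * GG q k = q ^ (k * k - k) * GG q n := by
  rw [nu, GG_eq q hq, GG_eq q hq, Finset.range_eq_Ico, Finset.range_eq_Ico, ← Finset.sum_Ico_consecutive _ (Nat.zero_le k) hk,
    ← Finset.prod_Ico_consecutive _ (Nat.zero_le k) hk, pow_add]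
  ring

lemma nu_self (q n : ℕ) : nu q n n = q ^ (n * n - n) := by
  simp [nu]

lemma nu_succ (q : ℕ) {n k : ℕ} (hk : k ≤ n) :
    nu q (n + 1) k = nu q n k * (q ^ n * (q ^ (n + 1) - 1)) := by
  rw [nu, nu, Finset.sum_Ico_succ_top hk, Finset.prod_Ico_succ_top hk, pow_add]
  ring

lemma sum_nu (q : ℕ) (hq : 1 ≤ q) (n : ℕ) :
    ∑ k ∈ Finset.range (n + 1), nu q n k = q ^ (n * n) := by
  induction n with
  | zero => simp [nu]
  | succ n ih =>
    rw [Finset.sum_range_succ, Finset.sum_congr rfl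
      (fun k hk => nu_succ q (Nat.lt_succ_iff.mp (Finset.mem_range.mp hk))), ← Finset.sum_mul, ih,
      nu_self]
    have e1 : (n + 1) * (n + 1) - (n + 1) = n * n + n := by
      have : (n + 1) * (n + 1) = n * n + n + (n + 1) := by ring
      omega
    have e2 : (n + 1) * (n + 1) = n * n + n + (n + 1) := by ring
    have hq1 : 1 ≤ q ^ (n + 1) := Nat.one_le_pow _ _ (by omega)
    rw [e1]
    calc q ^ (n * n) * (q ^ n * (q ^ (n + 1) - 1)) + q ^ (n * n + n)
        = q ^ (n * n + n) * (q ^ (n + 1) - 1) + q ^ (n * n + n) := by rw [pow_add]; ring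
      _ = q ^ (n * n + n) * (q ^ (n + 1) - 1 + 1) := by ring
      _ = q ^ (n * n + n) * q ^ (n + 1) := by rw [Nat.sub_add_cancel hq1]
      _ = q ^ (n * n + n + (n + 1)) := by rw [← pow_add]
      _ = q ^ ((n + 1) * (n + 1)) := by rw [e2]


/-! ### Finiteness instances -/

variable {K : Type*} [Field K] [Fintype K]

section Instances

variable {M N : Type*} [AddCommGroup M] [Module K M] [AddCommGroup N] [Module K N]

instance finite_linearMap [Finite M] [Finite N] : Finite (M →ₗ[K] N) :=
  Finite.of_injective (fun f => (f : M → N)) DFunLike.coe_injective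

instance finite_linearEquiv [Finite M] [Finite N] : Finite (M ≃ₗ[K] N) :=
  Finite.of_injective (fun f => (f : M → N)) DFunLike.coe_injective

instance finite_submodule [Finite M] : Finite (Submodule K M) :=
  Finite.of_injective (fun p => (p : Set M)) SetLike.coe_injective

end Instances

/-- `Nat.card` of a sigma type over a `Fintype`. -/
lemma nat_card_sigma {ι : Type*} [Fintype ι] (β : ι → Type*) [∀ i, Finite (β i)] :
    Nat.card (Σ i, β i) = ∑ i, Nat.card (β i) := by
  letI : ∀ i, Fintype (β i) := fun i => Fintype.ofFinite _
  simp [Nat.card_eq_fintype_card]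

/-! ### Cardinalities of spaces of linear maps -/

local notation "q" => Fintype.card K

lemma card_End (n : ℕ) :
    Nat.card (Module.End K (Fin n → K)) = q ^ (n * n) := by
  rw [Nat.card_congr (LinearMap.toMatrixAlgEquiv' (R := K) (n := Fin n)).toEquiv,
    Nat.card_congr (Matrix.of (m := Fin n) (n := Fin n) (α := K)).symm,
    Nat.card_eq_fintype_card]
  simp [← pow_mul]

lemma card_linearEquiv_pi (m : ℕ) :
    Nat.card ((Fin m → K) ≃ₗ[K] (Fin m → K)) = GG q m := by
  rw [← Nat.card_congr ((LinearMap.GeneralLinearGroup.generalLinearEquiv K (Fin m → K)).toEquiv),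
    Nat.card_congr (Units.mapEquiv
      (LinearMap.toMatrixAlgEquiv' (R := K) (n := Fin m)).toRingEquiv.toMulEquiv).toEquiv]
  have := Matrix.card_GL_field (𝔽 := K) m
  rw [show ((Matrix (Fin m) (Fin m) K)ˣ) = GL (Fin m) K from rfl, this, GG,
    ← Fin.prod_univ_eq_prod_range (fun i => q ^ m - q ^ i) m]

lemma card_linearEquiv {M N : Type*} [AddCommGroup M] [Module K M] [AddCommGroup N] [Module K N]
    [FiniteDimensional K M] [FiniteDimensional K N] {m : ℕ}
    (hM : finrank K M = m) (hN : finrank K N = m) :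
    Nat.card (M ≃ₗ[K] N) = GG q m := by
  have eM : M ≃ₗ[K] (Fin m → K) := LinearEquiv.ofFinrankEq _ _ (by rw [hM, Module.finrank_fin_fun])
  have eN : N ≃ₗ[K] (Fin m → K) := LinearEquiv.ofFinrankEq _ _ (by rw [hN, Module.finrank_fin_fun])
  rw [← card_linearEquiv_pi m]
  refine Nat.card_congr ⟨fun f => eM.symm.trans (f.trans eN), fun f => eM.trans (f.trans eN.symm),
    fun f => ?_, fun f => ?_⟩ <;> · ext x; simp

lemma card_units_End {M : Type*} [AddCommGroup M] [Module K M] [FiniteDimensional K M] {m : ℕ}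
    (hM : finrank K M = m) :
    Nat.card (Module.End K M)ˣ = GG q m := by
  rw [← card_linearEquiv (K := K) hM hM]
  exact Nat.card_congr (LinearMap.GeneralLinearGroup.generalLinearEquiv K M).toEquiv

/-! ### Fitting decomposition at exponent `n = finrank` -/

section Fitting

variable {V : Type*} [AddCommGroup V] [Module K V] [FiniteDimensional K V] {n : ℕ}

lemma ker_pow_stab (f : Module.End K V) (hV : finrank K V = n) {m : ℕ} (hm : n ≤ m) :
    LinearMap.ker (f ^ m) = LinearMap.ker (f ^ n) := by
  rw [Module.End.ker_pow_eq_ker_pow_finrank_of_le (by omega), hV]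

lemma range_pow_stab (f : Module.End K V) (hV : finrank K V = n) {m : ℕ} (hm : n ≤ m) :
    LinearMap.range (f ^ m) = LinearMap.range (f ^ n) := by
  have hle : LinearMap.range (f ^ m) ≤ LinearMap.range (f ^ n) := by
    rw [show m = n + (m - n) by omega, pow_add, Module.End.mul_eq_comp]
    exact LinearMap.range_comp_le_range _ _
  refine Submodule.eq_of_le_of_finrank_le hle ?_
  have h1 := LinearMap.finrank_range_add_finrank_ker (f ^ m)
  have h2 := LinearMap.finrank_range_add_finrank_ker (f ^ n)
  rw [ker_pow_stab f hV hm] at h1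
  omega

lemma isCompl_fitting (f : Module.End K V) (hV : finrank K V = n) :
    IsCompl (LinearMap.ker (f ^ n)) (LinearMap.range (f ^ n)) := by
  obtain ⟨N, hN⟩ := Filter.eventually_atTop.mp f.eventually_isCompl_ker_pow_range_pow
  have h := hN (max N n) (le_max_left _ _)
  rwa [ker_pow_stab f hV (le_max_right _ _), range_pow_stab f hV (le_max_right _ _)] at h

end Fitting


/-! ### Gluing a nilpotent and an invertible endomorphism along a decomposition -/

section Glue

set_option linter.unusedSectionVars false

variable {V : Type*} [AddCommGroup V] [Module K V] {U W : Submodule K V}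

/-- The direct sum of an endomorphism of `U` and one of `W`. -/
noncomputable def glue (h : IsCompl U W) (g : Module.End K U) (u : Module.End K W) :
    Module.End K V :=
  U.subtype ∘ₗ g ∘ₗ U.projectionOnto W h + W.subtype ∘ₗ u ∘ₗ W.projectionOnto U h.symm

lemma glue_left (h : IsCompl U W) (g : Module.End K U) (u : Module.End K W) (x : U) :
    glue h g u ↑x = ↑(g x) := by
  simp [glue, Submodule.projectionOnto_apply_left h,
    Submodule.projectionOnto_apply_right h.symm]

lemma glue_right (h : IsCompl U W) (g : Module.End K U) (u : Module.End K W) (x : W) :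
    glue h g u ↑x = ↑(u x) := by
  simp [glue, Submodule.projectionOnto_apply_left h.symm,
    Submodule.projectionOnto_apply_right h]

lemma glue_pow_left (h : IsCompl U W) (g : Module.End K U) (u : Module.End K W) (m : ℕ) (x : U) :
    ((glue h g u) ^ m) ↑x = ↑((g ^ m) x) := by
  induction m generalizing x with
  | zero => simp
  | succ m ih =>
    rw [pow_succ', Module.End.mul_apply, ih, glue_left, pow_succ' g, Module.End.mul_apply]

lemma glue_pow_right (h : IsCompl U W) (g : Module.End K U) (u : Module.End K W) (m : ℕ) (x : W) :
    ((glue h g u) ^ m) ↑x = ↑((u ^ m) x) := by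
  induction m generalizing x with
  | zero => simp
  | succ m ih =>
    rw [pow_succ', Module.End.mul_apply, ih, glue_right, pow_succ' u, Module.End.mul_apply]

lemma glue_pow_apply (h : IsCompl U W) (g : Module.End K U) (u : Module.End K W) (m : ℕ) (x : V) :
    ((glue h g u) ^ m) x =
      ↑((g ^ m) (U.projectionOnto W h x)) + ↑((u ^ m) (W.projectionOnto U h.symm x)) := by
  conv_lhs => rw [← Submodule.projection_add_projection_eq_self h x, Submodule.projection_apply,
    Submodule.projection_apply]
  rw [map_add, glue_pow_left, glue_pow_right]

variable {n : ℕ}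

lemma ker_glue_pow (h : IsCompl U W) {g : Module.End K U} {u : Module.End K W}
    (hg : g ^ n = 0) (hu : IsUnit u) : LinearMap.ker ((glue h g u) ^ n) = U := by
  ext x
  rw [LinearMap.mem_ker, glue_pow_apply, hg]
  simp only [LinearMap.zero_apply, ZeroMemClass.coe_zero, zero_add]
  constructor
  · intro hx
    have h1 : (u ^ n) (W.projectionOnto U h.symm x) = 0 := by
      exact_mod_cast hx
    have h2 : W.projectionOnto U h.symm x = 0 := by
      have := ((Module.End.isUnit_iff _).mp (hu.pow n)).injective
      apply this
      rw [h1, map_zero]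
    have := Submodule.projection_add_projection_eq_self h x
    rw [Submodule.projection_apply, Submodule.projection_apply, h2] at this
    simp only [ZeroMemClass.coe_zero, add_zero] at this
    rw [← this]
    exact Submodule.coe_mem _
  · intro hx
    rw [Submodule.projectionOnto_apply_of_mem_right h.symm hx, map_zero]
    simp

lemma range_glue_pow (h : IsCompl U W) {g : Module.End K U} {u : Module.End K W}
    (hg : g ^ n = 0) (hu : IsUnit u) : LinearMap.range ((glue h g u) ^ n) = W := by
  apply le_antisymm
  · rintro y ⟨x, rfl⟩
    rw [glue_pow_apply, hg]
    simp only [LinearMap.zero_apply, ZeroMemClass.coe_zero, zero_add]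
    exact Submodule.coe_mem _
  · intro w hw
    set u' := hu.unit with hu'
    refine ⟨↑(((↑(u'⁻¹) : Module.End K W) ^ n) ⟨w, hw⟩), ?_⟩
    rw [glue_pow_apply]
    rw [Submodule.projectionOnto_apply_right h, map_zero,
      Submodule.projectionOnto_apply_left h.symm]
    have : (u ^ n) ((((↑(u'⁻¹) : Module.End K W)) ^ n) ⟨w, hw⟩)
        = ((u ^ n) * ((↑(u'⁻¹) : Module.End K W) ^ n)) ⟨w, hw⟩ := rfl
    rw [this]
    have h1 : (u ^ n) * ((↑(u'⁻¹) : Module.End K W) ^ n) = 1 := by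
      have : u = ↑u' := (IsUnit.unit_spec hu).symm
      rw [this, ← Units.val_pow_eq_pow_val, ← Units.val_pow_eq_pow_val, ← Units.val_mul,
        inv_pow, mul_inv_cancel, Units.val_one]
    rw [h1]
    simp

end Glue


/-! ### Conjugation and nilpotency transport -/

section Transport

set_option linter.unusedSectionVars false

variable {M N : Type*} [AddCommGroup M] [Module K M] [AddCommGroup N] [Module K N]

lemma conj_pow' (e : M ≃ₗ[K] N) (g : Module.End K M) (m : ℕ) :
    e.conj (g ^ m) = (e.conj g) ^ m := by
  induction m with
  | zero =>
    simp only [pow_zero]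
    exact e.conj_id
  | succ m ih =>
    rw [pow_succ, pow_succ, Module.End.mul_eq_comp, Module.End.mul_eq_comp,
      LinearEquiv.conj_comp, ih]

lemma pow_eq_zero_iff_finrank [FiniteDimensional K M] {k n : ℕ} (hk : finrank K M = k)
    (hkn : k ≤ n) (g : Module.End K M) : g ^ n = 0 ↔ g ^ k = 0 := by
  constructor
  · intro h
    have h1 : LinearMap.ker (g ^ n) = LinearMap.ker (g ^ k) := by
      rw [Module.End.ker_pow_eq_ker_pow_finrank_of_le (by omega), hk]
    rw [← LinearMap.ker_eq_top] at h ⊢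
    rw [← h1, h]
  · intro h
    rw [show n = k + (n - k) by omega, pow_add, h, zero_mul]

lemma card_nilp_transport [FiniteDimensional K M] [Finite M] {k n : ℕ}
    (hk : finrank K M = k) (hkn : k ≤ n) :
    Nat.card {g : Module.End K M // g ^ n = 0} =
      Nat.card {g : Module.End K (Fin k → K) // g ^ k = 0} := by
  have eM : M ≃ₗ[K] (Fin k → K) := LinearEquiv.ofFinrankEq _ _ (by rw [hk, Module.finrank_fin_fun])
  refine Nat.card_congr (Equiv.subtypeEquiv eM.conj.toEquiv fun g => ?_)
  have h1 : (eM.conj g) ^ n = 0 ↔ g ^ n = 0 := by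
    rw [← conj_pow']
    exact eM.conj.map_eq_zero_iff
  rw [pow_eq_zero_iff_finrank (Module.finrank_fin_fun K) hkn (eM.conj g)] at h1
  exact h1.symm

end Transport

/-! ### Counting decompositions -/

section Decomp

variable {V : Type*} [AddCommGroup V] [Module K V] [FiniteDimensional K V]

lemma card_decomp_mul {n k : ℕ} (hk : k ≤ n) (hV : finrank K V = n) :
    Nat.card {p : Submodule K V × Submodule K V // IsCompl p.1 p.2 ∧ finrank K p.1 = k} *
      (GG q k * GG q (n - k)) = GG q n := by
  haveI : Finite V := Module.finite_of_finite K
  set A := (Fin k → K)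
  set B := (Fin (n - k) → K)
  set D := {p : Submodule K V × Submodule K V // IsCompl p.1 p.2 ∧ finrank K p.1 = k} with hD
  let Xi : (Σ p : D, ((A ≃ₗ[K] p.1.1) × (B ≃ₗ[K] p.1.2))) → ((A × B) ≃ₗ[K] V) := fun t =>
    (LinearEquiv.prodCongr t.2.1 t.2.2).trans (Submodule.prodEquivOfIsCompl _ _ t.1.2.1)
  have hXi : ∀ t a b, Xi t (a, b) = ↑(t.2.1 a) + ↑(t.2.2 b) := fun t a b => rfl
  have hrange1 : ∀ t, LinearMap.range ((Xi t).toLinearMap ∘ₗ LinearMap.inl K A B) = t.1.1.1 := by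
    intro t
    ext z
    constructor
    · rintro ⟨a, rfl⟩
      have : (Xi t).toLinearMap.comp (LinearMap.inl K A B) a = Xi t (a, 0) := rfl
      rw [this, hXi]
      simp only [map_zero, ZeroMemClass.coe_zero, add_zero]
      exact Submodule.coe_mem _
    · intro hz
      refine ⟨t.2.1.symm ⟨z, hz⟩, ?_⟩
      have : (Xi t).toLinearMap.comp (LinearMap.inl K A B) (t.2.1.symm ⟨z, hz⟩)
          = Xi t (t.2.1.symm ⟨z, hz⟩, 0) := rfl
      rw [this, hXi]
      simp
  have hrange2 : ∀ t, LinearMap.range ((Xi t).toLinearMap ∘ₗ LinearMap.inr K A B) = t.1.1.2 := by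
    intro t
    ext z
    constructor
    · rintro ⟨b, rfl⟩
      have : (Xi t).toLinearMap.comp (LinearMap.inr K A B) b = Xi t (0, b) := rfl
      rw [this, hXi]
      simp only [map_zero, ZeroMemClass.coe_zero, zero_add]
      exact Submodule.coe_mem _
    · intro hz
      refine ⟨t.2.2.symm ⟨z, hz⟩, ?_⟩
      have : (Xi t).toLinearMap.comp (LinearMap.inr K A B) (t.2.2.symm ⟨z, hz⟩)
          = Xi t (0, t.2.2.symm ⟨z, hz⟩) := rfl
      rw [this, hXi]
      simp
  have hbij : Function.Bijective Xi := by
    constructor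
    · intro t t' hEq
      obtain ⟨⟨⟨U, W⟩, hc, hk'⟩, e1, e2⟩ := t
      obtain ⟨⟨⟨U', W'⟩, hc', hk''⟩, e1', e2'⟩ := t'
      have hU : U = U' := by
        have h1 := hrange1 ⟨⟨(U, W), hc, hk'⟩, (e1, e2)⟩
        have h2 := hrange1 ⟨⟨(U', W'), hc', hk''⟩, (e1', e2')⟩
        dsimp at h1 h2
        rw [← h1, ← h2, hEq]
      subst hU
      have hW : W = W' := by
        have h1 := hrange2 ⟨⟨(U, W), hc, hk'⟩, (e1, e2)⟩
        have h2 := hrange2 ⟨⟨(U, W'), hc', hk''⟩, (e1', e2')⟩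
        dsimp at h1 h2
        rw [← h1, ← h2, hEq]
      subst hW
      have he1 : e1 = e1' := by
        refine LinearEquiv.toLinearMap_injective (LinearMap.ext fun a => ?_)
        have h3 : Xi ⟨⟨(U, W), hc, hk'⟩, (e1, e2)⟩ (a, 0)
            = Xi ⟨⟨(U, W), hc', hk''⟩, (e1', e2')⟩ (a, 0) := by rw [hEq]
        rw [hXi, hXi] at h3
        simp only [map_zero, ZeroMemClass.coe_zero, add_zero] at h3
        exact Subtype.ext h3
      have he2 : e2 = e2' := by
        refine LinearEquiv.toLinearMap_injective (LinearMap.ext fun b => ?_)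
        have h3 : Xi ⟨⟨(U, W), hc, hk'⟩, (e1, e2)⟩ (0, b)
            = Xi ⟨⟨(U, W), hc', hk''⟩, (e1', e2')⟩ (0, b) := by rw [hEq]
        rw [hXi, hXi] at h3
        simp only [map_zero, ZeroMemClass.coe_zero, zero_add] at h3
        exact Subtype.ext h3
      subst he1
      subst he2
      rfl
    · intro phi
      set f1 := phi.toLinearMap ∘ₗ LinearMap.inl K A B with hf1
      set f2 := phi.toLinearMap ∘ₗ LinearMap.inr K A B with hf2
      have hinj1 : Function.Injective f1 := phi.injective.comp LinearMap.inl_injective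
      have hinj2 : Function.Injective f2 := phi.injective.comp LinearMap.inr_injective
      have hmap1 : LinearMap.range f1 = Submodule.map phi.toLinearMap
          (LinearMap.range (LinearMap.inl K A B)) := LinearMap.range_comp _ _
      have hmap2 : LinearMap.range f2 = Submodule.map phi.toLinearMap
          (LinearMap.range (LinearMap.inr K A B)) := LinearMap.range_comp _ _
      have hc : IsCompl (LinearMap.range f1) (LinearMap.range f2) := by
        rw [hmap1, hmap2]
        have hinj0 : Function.Injective (phi.toLinearMap : A × B → V) := phi.injective
        constructor
        · rw [disjoint_iff, ← Submodule.map_inf phi.toLinearMap hinj0,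
            (LinearMap.isCompl_range_inl_inr (R := K) (M := A) (M₂ := B)).disjoint.eq_bot,
            Submodule.map_bot]
        · rw [codisjoint_iff, ← Submodule.map_sup,
            (LinearMap.isCompl_range_inl_inr (R := K) (M := A) (M₂ := B)).sup_eq_top,
            Submodule.map_top, LinearEquiv.range]
      have hk' : finrank K (LinearMap.range f1) = k := by
        rw [LinearMap.finrank_range_of_inj hinj1]
        exact Module.finrank_fin_fun K
      refine ⟨⟨⟨(LinearMap.range f1, LinearMap.range f2), hc, hk'⟩,
        (LinearEquiv.ofInjective f1 hinj1, LinearEquiv.ofInjective f2 hinj2)⟩, ?_⟩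
      refine LinearEquiv.toLinearMap_injective (LinearMap.ext fun x => ?_)
      obtain ⟨a, b⟩ := x
      have hsplit : ((a, b) : A × B) = (a, 0) + (0, b) := by simp
      rw [hsplit, map_add, map_add]
      have g1 : ∀ (c : A) (d : B), (Xi ⟨⟨(LinearMap.range f1, LinearMap.range f2), hc, hk'⟩,
          (LinearEquiv.ofInjective f1 hinj1, LinearEquiv.ofInjective f2 hinj2)⟩).toLinearMap (c, d)
          = ↑(LinearEquiv.ofInjective f1 hinj1 c) + ↑(LinearEquiv.ofInjective f2 hinj2 d) :=
        fun c d => rfl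
      rw [g1, g1]
      simp only [LinearEquiv.ofInjective_apply]
      show (f1 a + f2 0) + (f1 0 + f2 b) = phi.toLinearMap (a, 0) + phi.toLinearMap (0, b)
      simp only [map_zero, add_zero, zero_add]
      rfl
  have hcardT : Nat.card (Σ p : D, ((A ≃ₗ[K] p.1.1) × (B ≃ₗ[K] p.1.2)))
      = Nat.card ((A × B) ≃ₗ[K] V) := Nat.card_eq_of_bijective Xi hbij
  have hWrank : ∀ p : D, finrank K p.1.2 = n - k := by
    rintro ⟨⟨U, W⟩, hc, hk'⟩
    have := Submodule.finrank_add_eq_of_isCompl hc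
    rw [hV] at this
    dsimp at this hk' ⊢
    omega
  letI : Fintype D := Fintype.ofFinite _
  rw [nat_card_sigma] at hcardT
  have hterm : ∀ p : D, Nat.card ((A ≃ₗ[K] (p : Submodule K V × Submodule K V).1)
      × (B ≃ₗ[K] (p : Submodule K V × Submodule K V).2)) = GG q k * GG q (n - k) := by
    intro p
    rw [Nat.card_prod, card_linearEquiv (K := K) (Module.finrank_fin_fun K) p.2.2,
      card_linearEquiv (K := K) (Module.finrank_fin_fun K) (hWrank p)]
  rw [Finset.sum_congr rfl (fun p _ => hterm p), Finset.sum_const, smul_eq_mul,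
    Finset.card_univ] at hcardT
  have hAB : finrank K (A × B) = n := by
    rw [Module.finrank_prod, Module.finrank_fin_fun K, Module.finrank_fin_fun K]
    omega
  rw [card_linearEquiv (K := K) hAB hV] at hcardT
  rw [Nat.card_eq_fintype_card]
  exact hcardT

end Decomp


/-! ### The master bijection: Fitting decomposition of all endomorphisms -/

section Master

variable {V : Type*} [AddCommGroup V] [Module K V] [FiniteDimensional K V]

lemma card_End_eq_sum {n : ℕ} (hn : 1 ≤ n) (hV : finrank K V = n) :
    Nat.card (Module.End K V) = ∑ k ∈ Finset.range (n + 1),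
      Nat.card {p : Submodule K V × Submodule K V // IsCompl p.1 p.2 ∧ finrank K p.1 = k} *
        (Nat.card {g : Module.End K (Fin k → K) // g ^ k = 0} * GG q (n - k)) := by
  classical
  haveI : Finite V := Module.finite_of_finite K
  let D : ℕ → Type _ := fun k =>
    {p : Submodule K V × Submodule K V // IsCompl p.1 p.2 ∧ finrank K p.1 = k}
  let S := Σ k : Fin (n + 1), Σ p : D (k : ℕ),
    ({g : Module.End K (p : Submodule K V × Submodule K V).1 // g ^ n = 0} ×
      (Module.End K (p : Submodule K V × Submodule K V).2)ˣ)
  let Psi : S → Module.End K V := fun s => glue s.2.1.2.1 s.2.2.1.1 ↑s.2.2.2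
  have hbij : Function.Bijective Psi := by
    constructor
    · rintro ⟨k, ⟨⟨U, W⟩, hc, hkeq⟩, ⟨g, hg⟩, u⟩ ⟨k', ⟨⟨U', W'⟩, hc', hkeq'⟩, ⟨g', hg'⟩, u'⟩ hEq
      have hEq' : glue hc g ↑u = glue hc' g' ↑u' := hEq
      have e1 : LinearMap.ker ((glue hc g ↑u) ^ n) = U := ker_glue_pow hc hg u.isUnit
      have e1' : LinearMap.ker ((glue hc' g' ↑u') ^ n) = U' := ker_glue_pow hc' hg' u'.isUnit
      have hU : U = U' := by rw [← e1, ← e1', hEq']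
      subst hU
      have e2 : LinearMap.range ((glue hc g ↑u) ^ n) = W := range_glue_pow hc hg u.isUnit
      have e2' : LinearMap.range ((glue hc' g' ↑u') ^ n) = W' := range_glue_pow hc' hg' u'.isUnit
      have hW : W = W' := by rw [← e2, ← e2', hEq']
      subst hW
      have hkk : k = k' := by
        apply Fin.val_injective
        rw [← hkeq, ← hkeq']
      subst hkk
      have hgg : g = g' := by
        apply LinearMap.ext
        intro x
        have h1 : glue hc g ↑u ↑x = glue hc' g' ↑u' ↑x := by rw [hEq']
        rw [glue_left, glue_left] at h1
        exact Subtype.ext h1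
      subst hgg
      have huu : u = u' := by
        apply Units.ext
        apply LinearMap.ext
        intro x
        have h1 : glue hc g ↑u ↑x = glue hc' g ↑u' ↑x := by rw [hEq']
        rw [glue_right, glue_right] at h1
        exact Subtype.ext h1
      subst huu
      rfl
    · intro f
      set U := LinearMap.ker (f ^ n) with hU
      set W := LinearMap.range (f ^ n) with hW
      have hc : IsCompl U W := isCompl_fitting f hV
      have hfin : finrank K U ≤ n := hV ▸ Submodule.finrank_le U
      have hcomm : ∀ x, (f ^ n) (f x) = f ((f ^ n) x) := by
        intro x
        have h1 : ((f ^ (n + 1)) : Module.End K V) x = (f ^ n) (f x) := by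
          rw [pow_succ, Module.End.mul_apply]
        have h2 : ((f ^ (n + 1)) : Module.End K V) x = f ((f ^ n) x) := by
          rw [pow_succ', Module.End.mul_apply]
        rw [← h1, h2]
      have hmapU : ∀ x ∈ U, f x ∈ U := by
        intro x hx
        rw [hU, LinearMap.mem_ker] at hx ⊢
        rw [hcomm, hx, map_zero]
      have hmapW : ∀ x ∈ W, f x ∈ W := by
        rintro x ⟨y, rfl⟩
        exact ⟨f y, hcomm y⟩
      set g0 : Module.End K U := f.restrict hmapU with hg0def
      have hg0 : g0 ^ n = 0 := by
        rw [hg0def, Module.End.pow_restrict]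
        apply LinearMap.ext
        intro x
        apply Subtype.ext
        simp only [LinearMap.restrict_apply, LinearMap.zero_apply, ZeroMemClass.coe_zero]
        exact LinearMap.mem_ker.mp x.2
      set h0 : Module.End K W := f.restrict hmapW with hh0def
      have hbij0 : Function.Bijective h0 := by
        constructor
        · intro x y hxy
          have h1 : f ↑x = f ↑y := by
            have h := congrArg Subtype.val hxy
            simpa [hh0def, LinearMap.restrict_apply] using h
          have h2 : (↑x - ↑y : V) ∈ LinearMap.ker f := by
            rw [LinearMap.mem_ker, map_sub, h1, sub_self]
          have h3 : (↑x - ↑y : V) ∈ U := by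
            rw [hU]
            have hker : LinearMap.ker f ≤ LinearMap.ker (f ^ n) := by
              rw [show n = (n - 1) + 1 by omega, pow_succ, Module.End.mul_eq_comp]
              exact LinearMap.ker_le_ker_comp f (f ^ (n - 1))
            exact hker h2
          have h4 : (↑x - ↑y : V) ∈ W := sub_mem x.2 y.2
          have h5 : (↑x - ↑y : V) = 0 := Submodule.disjoint_def.mp hc.disjoint _ h3 h4
          exact Subtype.ext (sub_eq_zero.mp h5)
        · intro x
          have hx : (↑x : V) ∈ LinearMap.range (f ^ (n + 1)) := by
            rw [range_pow_stab f hV (Nat.le_succ n)]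
            exact x.2
          obtain ⟨y, hy⟩ := hx
          refine ⟨⟨(f ^ n) y, ⟨y, rfl⟩⟩, ?_⟩
          apply Subtype.ext
          have : h0 ⟨(f ^ n) y, ⟨y, rfl⟩⟩ = (⟨f ((f ^ n) y), _⟩ : W) := rfl
          rw [this]
          simp only
          rw [← hcomm]
          have hstep : (f ^ n) (f y) = (f ^ (n + 1)) y := by rw [pow_succ, Module.End.mul_apply]
          rw [hstep, hy]
      have hu : IsUnit h0 := (Module.End.isUnit_iff h0).mpr hbij0
      refine ⟨⟨⟨finrank K U, by omega⟩, ⟨⟨(U, W), hc, rfl⟩, ⟨g0, hg0⟩, hu.unit⟩⟩, ?_⟩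
      show glue hc g0 ↑hu.unit = f
      rw [IsUnit.unit_spec]
      apply LinearMap.ext
      intro x
      have hgl := glue_pow_apply hc g0 h0 1 x
      rw [pow_one, pow_one, pow_one] at hgl
      rw [hgl]
      have e1 : (↑(g0 (U.projectionOnto W hc x)) : V) = f ↑(U.projectionOnto W hc x) :=
        rfl
      have e2 : (↑(h0 (W.projectionOnto U hc.symm x)) : V)
          = f ↑(W.projectionOnto U hc.symm x) := rfl
      rw [e1, e2, ← map_add, ← Submodule.projection_apply, ← Submodule.projection_apply,
        Submodule.projection_add_projection_eq_self]
  have hcard : Nat.card (Module.End K V) = Nat.card S :=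
    (Nat.card_eq_of_bijective Psi hbij).symm
  rw [hcard]
  letI : ∀ k : ℕ, Fintype (D k) := fun k => Fintype.ofFinite _
  rw [show (Nat.card S) = ∑ k : Fin (n + 1), Nat.card (Σ p : D (k : ℕ),
      ({g : Module.End K (p : Submodule K V × Submodule K V).1 // g ^ n = 0} ×
        (Module.End K (p : Submodule K V × Submodule K V).2)ˣ)) from nat_card_sigma _]
  rw [← Fin.sum_univ_eq_sum_range (fun k => Nat.card (D k) *
    (Nat.card {g : Module.End K (Fin k → K) // g ^ k = 0} * GG q (n - k))) (n + 1)]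
  refine Finset.sum_congr rfl fun k _ => ?_
  rw [nat_card_sigma]
  have hterm : ∀ p : D (k : ℕ),
      Nat.card ({g : Module.End K (p : Submodule K V × Submodule K V).1 // g ^ n = 0} ×
        (Module.End K (p : Submodule K V × Submodule K V).2)ˣ)
      = Nat.card {g : Module.End K (Fin (k : ℕ) → K) // g ^ (k : ℕ) = 0} * GG q (n - k) := by
    rintro ⟨⟨U, W⟩, hc, hkeq⟩
    have hkn : (k : ℕ) ≤ n := by omega
    have hWrank : finrank K W = n - (k : ℕ) := by
      have := Submodule.finrank_add_eq_of_isCompl hc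
      rw [hV] at this
      dsimp at this hkeq ⊢
      omega
    rw [Nat.card_prod, card_nilp_transport (K := K) hkeq hkn, card_units_End (K := K) hWrank]
  rw [Finset.sum_congr rfl (fun p _ => hterm p), Finset.sum_const, smul_eq_mul,
    Finset.card_univ, ← Nat.card_eq_fintype_card]

end Master


/-! ### The count of nilpotent endomorphisms -/

theorem card_nilpotent (n : ℕ) :
    Nat.card {g : Module.End K (Fin n → K) // g ^ n = 0} = q ^ (n * n - n) := by
  induction n using Nat.strong_induction_on with
  | _ n ih =>
    rcases Nat.eq_zero_or_pos n with rfl | hn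
    · haveI hss : Subsingleton (Fin 0 → K) := ⟨fun a b => funext fun i => i.elim0⟩
      haveI : Subsingleton (Module.End K (Fin 0 → K)) :=
        ⟨fun f g => LinearMap.ext fun x => Subsingleton.elim _ _⟩
      rw [show (0 * 0 - 0 : ℕ) = 0 from rfl, pow_zero]
      rw [Nat.card_eq_one_iff_unique]
      exact ⟨⟨fun a b => Subtype.ext (Subsingleton.elim _ _)⟩, ⟨⟨0, Subsingleton.elim _ _⟩⟩⟩
    · have hn1 : 1 ≤ n := hn
      have hq2 : (2 : ℕ) ≤ q := Fintype.one_lt_card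
      have hq1 : (1 : ℕ) ≤ q := by omega
      have hV : finrank K (Fin n → K) = n := Module.finrank_fin_fun K
      have hsum := card_End_eq_sum (K := K) (V := Fin n → K) hn1 hV
      rw [card_End] at hsum
      have htk : ∀ k ∈ Finset.range n,
          Nat.card {p : Submodule K (Fin n → K) × Submodule K (Fin n → K) //
              IsCompl p.1 p.2 ∧ finrank K p.1 = k} *
            (Nat.card {g : Module.End K (Fin k → K) // g ^ k = 0} * GG q (n - k))
          = nu q n k := by
        intro k hk
        have hklt := Finset.mem_range.mp hk
        apply Nat.eq_of_mul_eq_mul_right (GG_pos q hq2 k)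
        calc Nat.card {p : Submodule K (Fin n → K) × Submodule K (Fin n → K) //
                IsCompl p.1 p.2 ∧ finrank K p.1 = k} *
              (Nat.card {g : Module.End K (Fin k → K) // g ^ k = 0} * GG q (n - k)) * GG q k
            = Nat.card {p : Submodule K (Fin n → K) × Submodule K (Fin n → K) //
                IsCompl p.1 p.2 ∧ finrank K p.1 = k} * (GG q k * GG q (n - k)) *
              Nat.card {g : Module.End K (Fin k → K) // g ^ k = 0} := by ring
          _ = GG q n * Nat.card {g : Module.End K (Fin k → K) // g ^ k = 0} := by
              rw [card_decomp_mul (show k ≤ n by omega) hV]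
          _ = GG q n * q ^ (k * k - k) := by rw [ih k hklt]
          _ = nu q n k * GG q k := by rw [nu_mul_GG q hq1 (show k ≤ n by omega)]; ring
      rw [Finset.sum_range_succ, Finset.sum_congr rfl htk] at hsum
      have hsn := sum_nu q hq1 n
      rw [Finset.sum_range_succ] at hsn
      have hTn : Nat.card {p : Submodule K (Fin n → K) × Submodule K (Fin n → K) //
            IsCompl p.1 p.2 ∧ finrank K p.1 = n} *
          (Nat.card {g : Module.End K (Fin n → K) // g ^ n = 0} * GG q (n - n))
          = nu q n n := Nat.add_left_cancel ((hsum.symm).trans hsn.symm)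
      have h2 : Nat.card {p : Submodule K (Fin n → K) × Submodule K (Fin n → K) //
            IsCompl p.1 p.2 ∧ finrank K p.1 = n} *
          (Nat.card {g : Module.End K (Fin n → K) // g ^ n = 0} * GG q (n - n)) * GG q n
          = Nat.card {g : Module.End K (Fin n → K) // g ^ n = 0} * GG q n := by
        calc Nat.card {p : Submodule K (Fin n → K) × Submodule K (Fin n → K) //
                IsCompl p.1 p.2 ∧ finrank K p.1 = n} *
              (Nat.card {g : Module.End K (Fin n → K) // g ^ n = 0} * GG q (n - n)) * GG q n
            = Nat.card {p : Submodule K (Fin n → K) × Submodule K (Fin n → K) //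
                IsCompl p.1 p.2 ∧ finrank K p.1 = n} * (GG q n * GG q (n - n)) *
              Nat.card {g : Module.End K (Fin n → K) // g ^ n = 0} := by ring
          _ = GG q n * Nat.card {g : Module.End K (Fin n → K) // g ^ n = 0} := by
              rw [card_decomp_mul (le_refl n) hV]
          _ = Nat.card {g : Module.End K (Fin n → K) // g ^ n = 0} * GG q n := by ring
      have h3 := Nat.eq_of_mul_eq_mul_right (GG_pos q hq2 n) h2
      rw [← h3, hTn, nu_self]

end SteinbergGLAux

/-- **Steinberg's count for `GL_n`.** The number of unipotent elements of
`GL_n(F_q)` equals `q ^ (n(n-1))`, which is the square of `q ^ (n(n-1)/2)`,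
the order of a Sylow `p`-subgroup of `GL_n(F_q)`. -/
theorem card_unipotent_GL (q n : ℕ) (hn : 1 ≤ n)
    (K : Type*) [Field K] [Fintype K] (hK : Fintype.card K = q) :
    Nat.card {u : (Matrix (Fin n) (Fin n) K)ˣ //
        ((u : Matrix (Fin n) (Fin n) K) - 1) ^ n = 0} = q ^ (n * (n - 1)) ∧
      q ^ (n * (n - 1)) = (q ^ (n * (n - 1) / 2)) ^ 2 := by
  subst hK
  constructor
  · have e1 : {u : (Matrix (Fin n) (Fin n) K)ˣ //
        ((u : Matrix (Fin n) (Fin n) K) - 1) ^ n = 0} ≃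
        {N : Matrix (Fin n) (Fin n) K // N ^ n = 0} :=
    { toFun := fun u => ⟨u.1.val - 1, u.2⟩
      invFun := fun N => ⟨(IsNilpotent.isUnit_one_add (⟨n, N.2⟩ : IsNilpotent N.1)).unit, by
        rw [IsUnit.unit_spec, add_sub_cancel_left]
        exact N.2⟩
      left_inv := fun u => by
        apply Subtype.ext
        apply Units.ext
        rw [IsUnit.unit_spec, add_comm, sub_add_cancel]
      right_inv := fun N => by
        apply Subtype.ext
        show ((IsNilpotent.isUnit_one_add (⟨n, N.2⟩ : IsNilpotent N.1)).unit).val - 1 = N.1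
        rw [IsUnit.unit_spec, add_sub_cancel_left] }
    have e2 : {N : Matrix (Fin n) (Fin n) K // N ^ n = 0} ≃
        {g : Module.End K (Fin n → K) // g ^ n = 0} := by
      refine Equiv.subtypeEquiv (Matrix.toLinAlgEquiv' (R := K) (n := Fin n)).toEquiv fun N => ?_
      rw [show (Matrix.toLinAlgEquiv' (R := K) (n := Fin n)).toEquiv N
          = Matrix.toLinAlgEquiv' N from rfl, ← map_pow]
      exact (_root_.map_eq_zero_iff _ (AlgEquiv.injective _)).symm
    rw [Nat.card_congr (e1.trans e2), SteinbergGLAux.card_nilpotent n]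
    congr 1
    rw [Nat.mul_sub, mul_one]
  · have heven : 2 ∣ n * (n - 1) := by
      rcases Nat.even_or_odd n with he | ho
      · exact Dvd.dvd.mul_right he.two_dvd _
      · have hd : Even (n - 1) := by
          rcases ho with ⟨m, rfl⟩
          exact ⟨m, by omega⟩
        exact Dvd.dvd.mul_left hd.two_dvd _
    rw [← pow_mul, Nat.div_mul_cancel heven]
end

section
/- (Hermitian/Fermat curve point count) Let q be a prime power. The number of points [x : y : z] in the projective plane over F_{q²} satisfying x^{q+1} + y^{q+1} + z^{q+1} = 0 equals q³ + 1. -/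
open Finset

section HermAux

variable {K : Type*} [Field K] [Fintype K] [DecidableEq K]

/-- The number of solutions of `z ^ m = a` in a field is at most `m`. -/
lemma herm_card_pow_le (m : ℕ) (hm : 0 < m) (a : K) :
    (Finset.univ.filter fun z : K => z ^ m = a).card ≤ m := by
  have hsub : (Finset.univ.filter fun z : K => z ^ m = a)
      ⊆ (Polynomial.nthRoots m a).toFinset := by
    intro z hz
    simp only [Finset.mem_filter, Finset.mem_univ, true_and] at hz
    rw [Multiset.mem_toFinset, Polynomial.mem_nthRoots hm]
    exact hz
  exact (Finset.card_le_card hsub).trans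
    ((Multiset.toFinset_card_le _).trans (Polynomial.card_nthRoots m a))

variable {q : ℕ}

omit [DecidableEq K] in
/-- `z ^ (q+1)` is fixed by `x ↦ x ^ q` when `|K| = q²`. -/
lemma herm_norm_fixed (hK : Fintype.card K = q ^ 2) (z : K) :
    (z ^ (q + 1)) ^ q = z ^ (q + 1) := by
  have hz : z ^ q ^ 2 = z := by rw [← hK]; exact FiniteField.pow_card z
  have h1 : (q + 1) * q = q ^ 2 + q := by ring
  rw [← pow_mul, h1, pow_add, hz, ← pow_succ']

/-- Fiber count of the norm map `z ↦ z^{q+1}` over a `q`-power fixed point. -/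
lemma herm_fiber_card (hq2 : 2 ≤ q) (hK : Fintype.card K = q ^ 2)
    (a : K) (ha : a ^ q = a) :
    (Finset.univ.filter fun z : K => z ^ (q + 1) = a).card
      = if a = 0 then 1 else q + 1 := by
  have hF0 : (Finset.univ.filter fun z : K => z ^ (q + 1) = (0 : K)).card = 1 := by
    have h : (Finset.univ.filter fun z : K => z ^ (q + 1) = (0 : K)) = {0} := by
      ext z
      simp [pow_eq_zero_iff (show q + 1 ≠ 0 by omega)]
    rw [h, Finset.card_singleton]
  rcases eq_or_ne a 0 with rfl | ha0
  · simpa using hF0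
  rw [if_neg ha0]
  -- set up the global count
  set F : K → ℕ := fun b => (Finset.univ.filter fun z : K => z ^ (q + 1) = b).card with hF
  set L : Finset K := Finset.univ.filter fun b : K => b ^ q = b with hLdef
  have hL0 : (0 : K) ∈ L := by simp [hLdef, zero_pow (show q ≠ 0 by omega)]
  have haL : a ∈ L.erase 0 := by
    simp [hLdef, Finset.mem_erase, ha0, ha]
  have hLcard : L.card ≤ q := by
    have hsub : L ⊆ insert (0 : K) (Polynomial.nthRoots (q - 1) (1 : K)).toFinset := by
      intro b hb
      simp only [hLdef, Finset.mem_filter, Finset.mem_univ, true_and] at hb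
      rcases eq_or_ne b 0 with rfl | hb0
      · exact Finset.mem_insert_self _ _
      · refine Finset.mem_insert_of_mem ?_
        rw [Multiset.mem_toFinset, Polynomial.mem_nthRoots (show 0 < q - 1 by omega)]
        have hbb : b ^ (q - 1) * b = 1 * b := by
          rw [one_mul, ← pow_succ, Nat.sub_add_cancel (by omega)]
          exact hb
        exact mul_right_cancel₀ hb0 hbb
    calc L.card ≤ _ := Finset.card_le_card hsub
      _ ≤ (Polynomial.nthRoots (q - 1) (1 : K)).toFinset.card + 1 := Finset.card_insert_le _ _
      _ ≤ (q - 1) + 1 := by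
          exact Nat.add_le_add_right
            ((Multiset.toFinset_card_le _).trans (Polynomial.card_nthRoots _ _)) 1
      _ = q := by omega
  have htotal : ∑ b ∈ L, F b = q ^ 2 := by
    rw [← hK, ← Finset.card_univ]
    exact (Finset.card_eq_sum_card_fiberwise
      (f := fun z : K => z ^ (q + 1)) (t := L) (fun z _ => by
        simp only [hLdef, Finset.mem_coe, Finset.mem_filter, Finset.mem_univ, true_and]
        exact herm_norm_fixed hK z)).symm
  have hsum' : ∑ b ∈ L.erase 0, F b = q ^ 2 - 1 := by
    have h := Finset.add_sum_erase L F hL0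
    have hF00 : F 0 = 1 := hF0
    omega
  have hcard' : (L.erase 0).card ≤ q - 1 := by
    rw [Finset.card_erase_of_mem hL0]; omega
  have hFle : ∀ b : K, F b ≤ q + 1 := fun b => herm_card_pow_le (q + 1) (by omega) b
  -- each fiber over a nonzero element of L has exactly q+1 elements
  by_contra hne
  have hlt : ∑ b ∈ L.erase 0, F b < ∑ _b ∈ L.erase 0, (q + 1) :=
    Finset.sum_lt_sum (fun i _ => hFle i) ⟨a, haL, lt_of_le_of_ne (hFle a) hne⟩
  rw [Finset.sum_const, smul_eq_mul] at hlt
  have hle2 : (L.erase 0).card * (q + 1) ≤ (q - 1) * (q + 1) :=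
    Nat.mul_le_mul_right _ hcard'
  have hq21 : (q - 1) * (q + 1) = q ^ 2 - 1 := by
    have h1 : 1 ≤ q := by omega
    have h2 : 1 ≤ q ^ 2 := Nat.one_le_pow _ _ (by omega)
    zify [h1, h2]
    ring
  omega

/-- Nested counting: cardinality of a filter on a product as a sum of fiber counts. -/
lemma herm_card_filter_prod {α β : Type*} [Fintype α] [Fintype β] [DecidableEq α]
    (P : α × β → Prop) [DecidablePred P] :
    (Finset.univ.filter P).card
      = ∑ a : α, (Finset.univ.filter fun b : β => P (a, b)).card := by
  rw [Finset.card_eq_sum_card_fiberwise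
    (f := Prod.fst) (t := Finset.univ) (fun x _ => Finset.mem_univ _)]
  refine Finset.sum_congr rfl fun a _ => ?_
  have h : (Finset.univ.filter P).filter (fun x => x.1 = a)
      = (Finset.univ.filter fun b : β => P (a, b)).map
          ⟨fun b => (a, b), fun b c h => by simpa using h⟩ := by
    ext ⟨x, y⟩
    simp only [Finset.mem_filter, Finset.mem_univ, true_and, Finset.mem_map,
      Function.Embedding.coeFn_mk, Prod.mk.injEq]
    constructor
    · rintro ⟨hP, rfl⟩
      exact ⟨y, hP, rfl⟩
    · rintro ⟨b, hb, hb'⟩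
      obtain ⟨rfl, rfl⟩ := Prod.mk.inj hb'
      exact ⟨hb, rfl⟩
  rw [h, Finset.card_map]

/-- The affine count of solutions of `x^{q+1}+y^{q+1}+z^{q+1}=0` in `K³`. -/
lemma herm_triple_count (hq2 : 2 ≤ q) (hK : Fintype.card K = q ^ 2)
    (hadd : ∀ x y : K, x ^ q = x → y ^ q = y → (x + y) ^ q = x + y)
    (hneg : ∀ x : K, x ^ q = x → (-x) ^ q = -x) :
    (Finset.univ.filter fun t : K × K × K =>
        t.1 ^ (q + 1) + t.2.1 ^ (q + 1) + t.2.2 ^ (q + 1) = 0).card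
      = (q ^ 2 - 1) * (q ^ 3 + 1) + 1 := by
  have hq1 : 1 ≤ q ^ 2 := Nat.one_le_pow _ _ (by omega)
  have hqq : q + 1 ≤ q ^ 2 := by nlinarith
  -- innermost count
  have hz : ∀ x y : K,
      (Finset.univ.filter fun z : K =>
        x ^ (q + 1) + y ^ (q + 1) + z ^ (q + 1) = 0).card
      = if x ^ (q + 1) + y ^ (q + 1) = 0 then 1 else q + 1 := by
    intro x y
    have h1 : (Finset.univ.filter fun z : K =>
        x ^ (q + 1) + y ^ (q + 1) + z ^ (q + 1) = 0)
        = Finset.univ.filter fun z : K =>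
            z ^ (q + 1) = -(x ^ (q + 1) + y ^ (q + 1)) := by
      ext z
      simp only [Finset.mem_filter, Finset.mem_univ, true_and]
      constructor <;> intro h <;> linear_combination h
    have ha : (-(x ^ (q + 1) + y ^ (q + 1))) ^ q = -(x ^ (q + 1) + y ^ (q + 1)) :=
      hneg _ (hadd _ _ (herm_norm_fixed hK x) (herm_norm_fixed hK y))
    rw [h1, herm_fiber_card hq2 hK _ ha]
    simp only [neg_eq_zero]
  -- middle count
  have hy : ∀ x : K,
      (Finset.univ.filter fun yz : K × K =>
        x ^ (q + 1) + yz.1 ^ (q + 1) + yz.2 ^ (q + 1) = 0).card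
      = if x = 0 then 1 + (q ^ 2 - 1) * (q + 1)
        else (q + 1) + (q ^ 2 - (q + 1)) * (q + 1) := by
    intro x
    rw [herm_card_filter_prod]
    have hrw : ∀ y : K,
        (Finset.univ.filter fun z : K =>
          x ^ (q + 1) + y ^ (q + 1) + z ^ (q + 1) = 0).card
        = if x ^ (q + 1) + y ^ (q + 1) = 0 then 1 else q + 1 := fun y => hz x y
    rw [Finset.sum_congr rfl fun y _ => hrw y, Finset.sum_ite, Finset.sum_const,
      Finset.sum_const, smul_eq_mul, smul_eq_mul]
    -- count of y with x^{q+1} + y^{q+1} = 0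
    have hcf : (Finset.univ.filter fun y : K =>
        x ^ (q + 1) + y ^ (q + 1) = 0).card = if x = 0 then 1 else q + 1 := by
      have h1 : (Finset.univ.filter fun y : K => x ^ (q + 1) + y ^ (q + 1) = 0)
          = Finset.univ.filter fun y : K => y ^ (q + 1) = -(x ^ (q + 1)) := by
        ext y
        simp only [Finset.mem_filter, Finset.mem_univ, true_and]
        constructor <;> intro h <;> linear_combination h
      rw [h1, herm_fiber_card hq2 hK _ (hneg _ (herm_norm_fixed hK x))]
      simp only [neg_eq_zero, pow_eq_zero_iff (show q + 1 ≠ 0 by omega)]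
    have htot : (Finset.univ.filter fun y : K =>
          x ^ (q + 1) + y ^ (q + 1) = 0).card
        + (Finset.univ.filter fun y : K =>
          ¬(x ^ (q + 1) + y ^ (q + 1) = 0)).card = q ^ 2 := by
      rw [Finset.card_filter_add_card_filter_not, Finset.card_univ, hK]
    rcases eq_or_ne x 0 with rfl | hx
    · rw [if_pos rfl] at hcf ⊢
      rw [hcf] at htot ⊢
      have : (Finset.univ.filter fun y : K =>
          ¬((0:K) ^ (q + 1) + y ^ (q + 1) = 0)).card = q ^ 2 - 1 := by omega
      rw [this]
      try ring
    · rw [if_neg hx] at hcf ⊢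
      rw [hcf] at htot ⊢
      have : (Finset.univ.filter fun y : K =>
          ¬(x ^ (q + 1) + y ^ (q + 1) = 0)).card = q ^ 2 - (q + 1) := by omega
      rw [this]
      try ring
  -- outer count
  rw [herm_card_filter_prod, Finset.sum_congr rfl fun x _ => hy x, Finset.sum_ite,
    Finset.sum_const, Finset.sum_const, smul_eq_mul, smul_eq_mul]
  have h1 : (Finset.univ.filter fun x : K => x = 0) = {(0 : K)} := by
    rw [Finset.filter_eq']; simp
  have h2 : (Finset.univ.filter fun x : K => ¬x = 0).card = q ^ 2 - 1 := by
    have he : (Finset.univ.filter fun x : K => ¬x = 0) = Finset.univ.erase (0 : K) := by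
      ext x; simp
    rw [he, Finset.card_erase_of_mem (Finset.mem_univ _), Finset.card_univ, hK]
  rw [h1, h2, Finset.card_singleton]
  zify [hq1, hqq]
  ring

/-- The equivalence between `Fin 3 → K` and `K × K × K`. -/
def hermEquiv (K : Type*) : (Fin 3 → K) ≃ K × K × K where
  toFun v := (v 0, v 1, v 2)
  invFun t := ![t.1, t.2.1, t.2.2]
  left_inv v := by funext i; fin_cases i <;> rfl
  right_inv t := rfl

omit [Field K] [Fintype K] [DecidableEq K] in
lemma hermEquiv_zero_iff [Zero K] : ∀ v : Fin 3 → K, v = 0 ↔ hermEquiv K v = 0 := by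
  intro v
  constructor
  · rintro rfl; rfl
  · intro h; apply (hermEquiv K).injective; rw [h]; rfl

/-- The number of nonzero affine solutions. -/
lemma herm_nonzero_count (hq2 : 2 ≤ q) (hK : Fintype.card K = q ^ 2)
    (hadd : ∀ x y : K, x ^ q = x → y ^ q = y → (x + y) ^ q = x + y)
    (hneg : ∀ x : K, x ^ q = x → (-x) ^ q = -x) :
    Nat.card {v : Fin 3 → K //
      v ≠ 0 ∧ v 0 ^ (q + 1) + v 1 ^ (q + 1) + v 2 ^ (q + 1) = 0}
      = (q ^ 2 - 1) * (q ^ 3 + 1) := by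
  have hTcard : (Finset.univ.filter fun t : K × K × K =>
      t.1 ^ (q + 1) + t.2.1 ^ (q + 1) + t.2.2 ^ (q + 1) = 0).card
      = (q ^ 2 - 1) * (q ^ 3 + 1) + 1 := herm_triple_count hq2 hK hadd hneg
  have h1 : Nat.card {t : K × K × K //
      t ≠ 0 ∧ t.1 ^ (q + 1) + t.2.1 ^ (q + 1) + t.2.2 ^ (q + 1) = 0}
      = (Finset.univ.filter fun t : K × K × K =>
          t ≠ 0 ∧ t.1 ^ (q + 1) + t.2.1 ^ (q + 1) + t.2.2 ^ (q + 1) = 0).card := by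
    rw [Nat.card_eq_fintype_card]
    exact Fintype.card_subtype _
  have hTe : (Finset.univ.filter fun t : K × K × K =>
      t ≠ 0 ∧ t.1 ^ (q + 1) + t.2.1 ^ (q + 1) + t.2.2 ^ (q + 1) = 0)
      = (Finset.univ.filter fun t : K × K × K =>
          t.1 ^ (q + 1) + t.2.1 ^ (q + 1) + t.2.2 ^ (q + 1) = 0).erase 0 := by
    ext t
    simp only [Finset.mem_filter, Finset.mem_univ, true_and, Finset.mem_erase]
  have h0T : (0 : K × K × K) ∈ (Finset.univ.filter fun t : K × K × K =>
      t.1 ^ (q + 1) + t.2.1 ^ (q + 1) + t.2.2 ^ (q + 1) = 0) := by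
    simp [zero_pow (show q + 1 ≠ 0 by omega)]
  have he : ∀ v : Fin 3 → K, v = 0 ↔ hermEquiv K v = 0 := hermEquiv_zero_iff
  have hcongr : Nat.card {v : Fin 3 → K //
      v ≠ 0 ∧ v 0 ^ (q + 1) + v 1 ^ (q + 1) + v 2 ^ (q + 1) = 0}
      = Nat.card {t : K × K × K //
          t ≠ 0 ∧ t.1 ^ (q + 1) + t.2.1 ^ (q + 1) + t.2.2 ^ (q + 1) = 0} :=
    Nat.card_congr (Equiv.subtypeEquiv (hermEquiv K) (fun v =>
      and_congr (not_congr (he v)) Iff.rfl))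
  rw [hcongr, h1, hTe, Finset.card_erase_of_mem h0T, hTcard, Nat.add_sub_cancel]

end HermAux

/-- **Hermitian/Fermat curve point count.** The number of points
`[x : y : z]` of the projective plane over `F_{q²}` with
`x^{q+1} + y^{q+1} + z^{q+1} = 0` equals `q³ + 1`. -/
theorem card_hermitian_curve (q : ℕ) (hq : IsPrimePow q)
    (K : Type*) [Field K] [Fintype K] (hK : Fintype.card K = q ^ 2) :
    Nat.card {P : Projectivization K (Fin 3 → K) //
        (P.rep 0) ^ (q + 1) + (P.rep 1) ^ (q + 1) + (P.rep 2) ^ (q + 1) = 0} =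
      q ^ 3 + 1 := by
  classical
  obtain ⟨p, k, hp, hk, hpk⟩ := hq
  have hp' : p.Prime := Nat.prime_iff.mpr hp
  have hq2 : 2 ≤ q := by
    calc 2 ≤ p := hp'.two_le
    _ ≤ p ^ k := Nat.le_self_pow (by omega) p
    _ = q := hpk
  have hpos : 0 < q ^ 2 - 1 := by
    have h4 : 2 ^ 2 ≤ q ^ 2 := Nat.pow_le_pow_left hq2 2
    omega
  -- characteristic
  haveI hrc : CharP K (ringChar K) := ringChar.charP K
  haveI : CharP K p := by
    obtain ⟨n, hrp, hcard⟩ := FiniteField.card K (ringChar K)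
    have h1 : p ∣ (ringChar K) ^ (n : ℕ) := by
      rw [← hcard, hK, ← hpk, ← pow_mul]
      exact dvd_pow_self p (by omega)
    have hdvd : p ∣ ringChar K := hp'.dvd_of_dvd_pow h1
    have hpe : p = ringChar K := (Nat.prime_dvd_prime_iff_eq hp' hrp).mp hdvd
    exact hpe ▸ ringChar.charP K
  haveI : Fact p.Prime := ⟨hp'⟩
  have hadd : ∀ x y : K, x ^ q = x → y ^ q = y → (x + y) ^ q = x + y := by
    intro x y hx hy
    rw [← hpk, add_pow_char_pow, hpk, hx, hy]
  have hneg : ∀ x : K, x ^ q = x → (-x) ^ q = -x := by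
    intro x hx
    calc (-x) ^ q = (0 - x) ^ p ^ k := by rw [hpk, zero_sub]
    _ = 0 ^ p ^ k - x ^ p ^ k := sub_pow_char_pow _ _ _
    _ = -x := by
        rw [hpk, hx, zero_pow (show q ≠ 0 by omega), zero_sub]
  -- scaling invariance
  have hscale : ∀ (c : K) (v : Fin 3 → K),
      v 0 ^ (q + 1) + v 1 ^ (q + 1) + v 2 ^ (q + 1) = 0 →
      (c • v) 0 ^ (q + 1) + (c • v) 1 ^ (q + 1) + (c • v) 2 ^ (q + 1) = 0 := by
    intro c v hv
    simp only [Pi.smul_apply, smul_eq_mul, mul_pow]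
    calc (c ^ (q+1)) * v 0 ^ (q+1) + (c ^ (q+1)) * v 1 ^ (q+1)
          + (c ^ (q+1)) * v 2 ^ (q+1)
        = c ^ (q+1) * (v 0 ^ (q+1) + v 1 ^ (q+1) + v 2 ^ (q+1)) := by ring
    _ = 0 := by rw [hv, mul_zero]
  -- the bijection between (projective solutions) × Kˣ and nonzero affine solutions
  let f : {P : Projectivization K (Fin 3 → K) //
      (P.rep 0) ^ (q + 1) + (P.rep 1) ^ (q + 1) + (P.rep 2) ^ (q + 1) = 0} × Kˣ →
      {v : Fin 3 → K // v ≠ 0 ∧ v 0 ^ (q + 1) + v 1 ^ (q + 1) + v 2 ^ (q + 1) = 0} :=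
    fun Pc => ⟨(Pc.2 : K) • Pc.1.1.rep,
      smul_ne_zero (Units.ne_zero Pc.2) Pc.1.1.rep_nonzero,
      hscale _ _ Pc.1.2⟩
  have hfbij : Function.Bijective f := by
    constructor
    · rintro ⟨⟨P, hP⟩, c⟩ ⟨⟨Q, hQ⟩, d⟩ h
      have h' : (c : K) • P.rep = (d : K) • Q.rep := congrArg Subtype.val h
      have hPQ : P = Q := by
        conv_lhs => rw [← P.mk_rep]
        conv_rhs => rw [← Q.mk_rep]
        rw [Projectivization.mk_eq_mk_iff]
        refine ⟨c⁻¹ * d, ?_⟩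
        rw [Units.smul_def, Units.val_mul, mul_smul, ← h', smul_smul]
        simp
      subst hPQ
      obtain ⟨i, hi⟩ := Function.ne_iff.mp P.rep_nonzero
      have hcd : (c : K) = (d : K) := by
        have h2 := congrFun h' i
        simp only [Pi.smul_apply, smul_eq_mul] at h2
        exact mul_right_cancel₀ hi h2
      simp [Prod.ext_iff, Subtype.ext_iff, Units.ext_iff, hcd]
    · rintro ⟨v, hv0, hv⟩
      obtain ⟨c, hc⟩ := Projectivization.exists_smul_eq_mk_rep K v hv0
      have hcond : ((Projectivization.mk K v hv0).rep 0) ^ (q + 1)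
          + ((Projectivization.mk K v hv0).rep 1) ^ (q + 1)
          + ((Projectivization.mk K v hv0).rep 2) ^ (q + 1) = 0 := by
        rw [← hc, Units.smul_def]
        exact hscale _ _ hv
      refine ⟨(⟨Projectivization.mk K v hv0, hcond⟩, c⁻¹), ?_⟩
      apply Subtype.ext
      show ((c⁻¹ : Kˣ) : K) • (Projectivization.mk K v hv0).rep = v
      rw [← hc, Units.smul_def, smul_smul]
      simp
  have hcardeq := Nat.card_congr (Equiv.ofBijective f hfbij)
  rw [Nat.card_prod] at hcardeq
  have hcardU : Nat.card Kˣ = q ^ 2 - 1 := by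
    rw [Nat.card_eq_fintype_card, Fintype.card_units, hK]
  have hS : Nat.card {v : Fin 3 → K //
      v ≠ 0 ∧ v 0 ^ (q + 1) + v 1 ^ (q + 1) + v 2 ^ (q + 1) = 0}
      = (q ^ 2 - 1) * (q ^ 3 + 1) := herm_nonzero_count hq2 hK hadd hneg
  rw [hS, hcardU] at hcardeq
  exact Nat.eq_of_mul_eq_mul_right hpos
    (hcardeq.trans (Nat.mul_comm _ _))
end
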